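/- arXiv:1308.5490 — 3 statements merged into one kernel-verified Lean document; each statement's English description precedes it below -/
import Mathlib

section
/- The partition of the vertex set of the arrangement graph A(n,k) into cells according to cycle type (two k-permutations lie in the same cell if and only if they have the same cycle type) is an equitable partition: for any two cells X, Y, every vertex in X has the same number of neighbors in Y. -/
attribute [local instance] Classical.propDecidable

def arrangementGraph (n k : ℕ) :
    SimpleGraph {π : Fin k → Fin n // Function.Injective π} where
  Adj π ρ := ∃! i, π.1 i ≠ ρ.1 i
  symm := by
    refine ⟨?_⟩
    rintro π ρ ⟨i, hi, hu⟩
    exact ⟨i, hi.symm, fun j hj => hu j hj.symm⟩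
  loopless := by refine ⟨?_⟩; rintro π ⟨i, hi, -⟩; exact hi rfl

/-- Extend a `k`-permutation `π : [k] → [n]` to a map `ℕ → ℕ` fixing everything
outside `{0,…,k-1}`, so that its dynamics encode the cycles and paths of `π`. -/
def extFun {n k : ℕ} (π : Fin k → Fin n) : ℕ → ℕ :=
  fun u => if h : u < k then (π ⟨u, h⟩ : ℕ) else u

/-- The number of elements of `[k]` lying on a cycle of length `i` of `π`. -/
noncomputable def cyclicCount {n k : ℕ} (π : Fin k → Fin n) (i : ℕ) : ℕ :=
  Nat.card {u : ℕ // u < k ∧ Function.minimalPeriod (extFun π) u = i}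

/-- The number of paths of length `i` in the cyclic decomposition of `π`. -/
noncomputable def pathCount {n k : ℕ} (π : Fin k → Fin n) (i : ℕ) : ℕ :=
  Nat.card {u : ℕ // u < k ∧ (∀ w, w < k → extFun π w ≠ u) ∧
    sInf {ℓ : ℕ | k ≤ (extFun π)^[ℓ] u} = i}

/-- Two `k`-permutations have the same cycle type iff for every `i` they have the same
number of cycles of length `i` and the same number of paths of length `i`. -/
def SameCycleType {n k : ℕ} (π ρ : Fin k → Fin n) : Prop :=
  ∀ i, cyclicCount π i = cyclicCount ρ i ∧ pathCount π i = pathCount ρ i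


namespace ArrEq

open Function

variable {k n : ℕ} {f g : ℕ → ℕ}

structure ExtLike (k n : ℕ) (f : ℕ → ℕ) : Prop where
  le : k ≤ n
  fix : ∀ u, k ≤ u → f u = u
  lt : ∀ u, u < k → f u < n
  inj : ∀ u, u < k → ∀ v, v < k → f u = f v → u = v

lemma extLike_extFun {π : Fin k → Fin n} (hπ : Function.Injective π) (hkn : k ≤ n) :
    ExtLike k n (extFun π) := by
  refine ⟨hkn, fun u hu => ?_, fun u hu => ?_, fun u hu v hv h => ?_⟩
  · simp [extFun, Nat.not_lt.2 hu]
  · simp only [extFun, dif_pos hu]; exact (π ⟨u, hu⟩).isLt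
  · simp only [extFun, dif_pos hu, dif_pos hv] at h
    exact congrArg Fin.val (hπ (Fin.ext h))

noncomputable def exitT (k : ℕ) (f : ℕ → ℕ) (u : ℕ) : ℕ := sInf {ℓ : ℕ | k ≤ f^[ℓ] u}


section
variable {k n : ℕ} {f g : ℕ → ℕ}
open Function

lemma ArrEq.iter_fix (hf : ExtLike k n f) {u : ℕ} (hu : k ≤ u) (j : ℕ) : f^[j] u = u := by
  induction j with
  | zero => rfl
  | succ m ih => rw [Function.iterate_succ_apply', ih, hf.fix u hu]

lemma ArrEq.iter_ge (hf : ExtLike k n f) {u j : ℕ} (h : k ≤ f^[j] u) {j' : ℕ} (hj : j ≤ j') :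
    f^[j'] u = f^[j] u := by
  obtain ⟨m, rfl⟩ := Nat.exists_eq_add_of_le hj
  rw [Nat.add_comm, Function.iterate_add_apply]
  exact ArrEq.iter_fix hf h m

lemma ArrEq.orbit_lt (hf : ExtLike k n f) {u : ℕ} (hu : u < k) (hp : u ∈ periodicPts f)
    (j : ℕ) : f^[j] u < k := by
  by_contra hcon
  push_neg at hcon
  have hmp : 0 < minimalPeriod f u := minimalPeriod_pos_of_mem_periodicPts hp
  set i := minimalPeriod f u with hi
  have h1 : f^[i * (j + 1)] u = u := (isPeriodicPt_minimalPeriod f u).mul_const (j+1)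
  have h2 : j ≤ i * (j + 1) := by nlinarith
  have := ArrEq.iter_ge hf hcon h2
  rw [h1] at this
  omega

lemma ArrEq.cancel (hf : ExtLike k n f) {a u v : ℕ} (ha : ∀ c, c < a → f^[c] u < k)
    (hv : ∀ c, c < a → f^[c] v < k) (h : f^[a] u = f^[a] v) : u = v := by
  induction a with
  | zero => exact h
  | succ m ih =>
    rw [Function.iterate_succ_apply', Function.iterate_succ_apply'] at h
    exact ih (fun c hc => ha c (by omega)) (fun c hc => hv c (by omega))
      (hf.inj _ (ha m (by omega)) _ (hv m (by omega)) h)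

lemma ArrEq.periodic_pred (hf : ExtLike k n f) {v w : ℕ} (hv : v < k) (hp : v ∈ periodicPts f)
    (hw : w < k) (hfw : f w = v) : w ∈ periodicPts f ∧ w = f^[minimalPeriod f v - 1] v := by
  have hmp : 0 < minimalPeriod f v := minimalPeriod_pos_of_mem_periodicPts hp
  set i := minimalPeriod f v with hi
  have h1 : f (f^[i-1] v) = v := by
    have h0 : f^[i] v = v := isPeriodicPt_minimalPeriod f v
    calc f (f^[i-1] v) = f^[i-1+1] v := (Function.iterate_succ_apply' f (i-1) v).symm
    _ = v := by rw [show i-1+1 = i by omega]; exact h0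
  have h2 : w = f^[i-1] v := hf.inj _ hw _ (ArrEq.orbit_lt hf hv hp _) (by rw [hfw, h1])
  refine ⟨?_, h2⟩
  rw [h2]
  obtain ⟨m, hm0, hmp'⟩ := hp
  exact ⟨m, hm0, hmp'.apply_iterate _⟩

lemma ArrEq.exit_exists (hf : ExtLike k n f) {u : ℕ} (hu : u < k) (hp : u ∉ periodicPts f) :
    ∃ ℓ, ℓ ≤ k ∧ k ≤ f^[ℓ] u := by
  by_contra hcon
  push_neg at hcon
  have hall : ∀ ℓ, ℓ ≤ k → f^[ℓ] u < k := fun ℓ hℓ => hcon ℓ hℓ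
  have hcard : Fintype.card (Fin k) < Fintype.card (Fin (k+1)) := by simp
  obtain ⟨a, b, hab, heq⟩ := Fintype.exists_ne_map_eq_of_card_lt
    (fun j : Fin (k+1) => (⟨f^[j.1] u, hall j.1 (by omega)⟩ : Fin k)) hcard
  wlog hlt : a.1 < b.1 generalizing a b
  · have hne : a.1 ≠ b.1 := fun h => hab (Fin.ext h)
    exact this b a hab.symm heq.symm (by omega)
  have heq' : f^[a.1] u = f^[b.1] u := congrArg Fin.val heq
  have hcan : u = f^[b.1 - a.1] u := by
    have key : f^[a.1] u = f^[a.1] (f^[b.1 - a.1] u) := by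
      rw [← Function.iterate_add_apply, show a.1 + (b.1 - a.1) = b.1 by omega]
      exact heq'
    exact ArrEq.cancel hf (fun c hc => hall c (by omega))
      (fun c hc => by
        rw [← Function.iterate_add_apply]
        exact hall _ (by omega)) key
  exact hp ⟨b.1 - a.1, by omega, hcan.symm⟩

end

section
variable {k n : ℕ} {f g : ℕ → ℕ}
open Function

lemma ArrEq.exit_ne (hf : ExtLike k n f) {u : ℕ} (hu : u < k) (hp : u ∉ periodicPts f) :
    {ℓ : ℕ | k ≤ f^[ℓ] u}.Nonempty := by
  obtain ⟨ℓ, -, h⟩ := ArrEq.exit_exists hf hu hp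
  exact ⟨ℓ, h⟩

lemma ArrEq.exit_spec (hf : ExtLike k n f) {u : ℕ} (hu : u < k) (hp : u ∉ periodicPts f) :
    k ≤ f^[exitT k f u] u :=
  Nat.sInf_mem (ArrEq.exit_ne hf hu hp)

lemma ArrEq.exit_lt_of (hf : ExtLike k n f) {u d : ℕ} (hd : d < exitT k f u) :
    f^[d] u < k := by
  have := Nat.notMem_of_lt_sInf hd
  simpa [exitT] using this

lemma ArrEq.exit_le (hf : ExtLike k n f) {u ℓ : ℕ} (h : k ≤ f^[ℓ] u) : exitT k f u ≤ ℓ :=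
  Nat.sInf_le h

lemma ArrEq.exit_le_k (hf : ExtLike k n f) {u : ℕ} (hu : u < k) (hp : u ∉ periodicPts f) :
    exitT k f u ≤ k := by
  obtain ⟨ℓ, hℓ, h⟩ := ArrEq.exit_exists hf hu hp
  exact le_trans (Nat.sInf_le h) hℓ

lemma ArrEq.exit_pos (hf : ExtLike k n f) {u : ℕ} (hu : u < k) (hp : u ∉ periodicPts f) :
    0 < exitT k f u := by
  rcases Nat.eq_zero_or_pos (exitT k f u) with h | h
  · have := ArrEq.exit_spec hf hu hp
    rw [h] at this
    simp only [Function.iterate_zero_apply] at this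
    omega
  · exact h

lemma ArrEq.start_not_periodic (hf : ExtLike k n f) {s : ℕ} (hs1 : s < k)
    (hs2 : ∀ w, w < k → f w ≠ s) : s ∉ periodicPts f := by
  intro hp
  have hmp : 0 < minimalPeriod f s := minimalPeriod_pos_of_mem_periodicPts hp
  set i := minimalPeriod f s with hi
  have h1 : f (f^[i-1] s) = s := by
    calc f (f^[i-1] s) = f^[i-1+1] s := (Function.iterate_succ_apply' f (i-1) s).symm
    _ = s := by rw [show i-1+1 = i by omega]; exact isPeriodicPt_minimalPeriod f s
  exact hs2 _ (ArrEq.orbit_lt hf hs1 hp _) h1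

lemma ArrEq.path_not_periodic (hf : ExtLike k n f) {s : ℕ} (hs1 : s < k)
    (hs2 : ∀ w, w < k → f w ≠ s) (d : ℕ) (hd : ∀ c, c ≤ d → f^[c] s < k) :
    f^[d] s ∉ periodicPts f := by
  induction d with
  | zero => exact ArrEq.start_not_periodic hf hs1 hs2
  | succ m ih =>
    intro hp
    have h1 : f (f^[m] s) = f^[m+1] s := (Function.iterate_succ_apply' f m s).symm
    have := ArrEq.periodic_pred hf (hd (m+1) le_rfl) hp (hd m (by omega)) h1
    exact ih (fun c hc => hd c (by omega)) this.1
end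

section
variable {k n : ℕ} {f g : ℕ → ℕ}
open Function

def ArrEq.IsStart (k : ℕ) (f : ℕ → ℕ) (s : ℕ) : Prop := s < k ∧ ∀ w, w < k → f w ≠ s

lemma ArrEq.start_np (hf : ExtLike k n f) {s : ℕ} (hs : ArrEq.IsStart k f s) :
    s ∉ periodicPts f := ArrEq.start_not_periodic hf hs.1 hs.2

lemma ArrEq.start_lt_of_le (hf : ExtLike k n f) {s d : ℕ} (hs : ArrEq.IsStart k f s)
    (hd : d < exitT k f s) : f^[d] s < k := ArrEq.exit_lt_of hf hd

-- uniqueness of path addresses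
lemma ArrEq.start_unique_aux (hf : ExtLike k n f) {s s' d d' : ℕ} (hs : ArrEq.IsStart k f s)
    (hs' : ArrEq.IsStart k f s') (hd : d ≤ exitT k f s) (hd' : d' ≤ exitT k f s')
    (hdd : d ≤ d') (h : f^[d] s = f^[d'] s') : s = s' ∧ d = d' := by
  have key : s = f^[d' - d] s' := by
    have hiter : f^[d] s = f^[d] (f^[d' - d] s') := by
      rw [← Function.iterate_add_apply, show d + (d' - d) = d' by omega]
      exact h
    exact ArrEq.cancel hf (fun c hc => ArrEq.exit_lt_of hf (by omega))
      (fun c hc => by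
        rw [← Function.iterate_add_apply]
        exact ArrEq.exit_lt_of hf (by omega)) hiter
  rcases Nat.eq_zero_or_pos (d' - d) with h0 | h0
  · have : d = d' := by omega
    subst this
    simp only [Nat.sub_self, Function.iterate_zero_apply] at key
    exact ⟨key, rfl⟩
  · exfalso
    have h1 : f (f^[d' - d - 1] s') = s := by
      have h2 : f (f^[d' - d - 1] s') = f^[d' - d] s' := by
        calc f (f^[d' - d - 1] s') = f^[d' - d - 1 + 1] s' :=
          (Function.iterate_succ_apply' f _ s').symm
        _ = f^[d' - d] s' := by rw [show d' - d - 1 + 1 = d' - d by omega]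
      rw [h2, ← key]
    exact hs.2 (f^[d' - d - 1] s') (ArrEq.exit_lt_of hf (by omega)) h1

lemma ArrEq.start_unique (hf : ExtLike k n f) {s s' d d' : ℕ} (hs : ArrEq.IsStart k f s)
    (hs' : ArrEq.IsStart k f s') (hd : d ≤ exitT k f s) (hd' : d' ≤ exitT k f s')
    (h : f^[d] s = f^[d'] s') : s = s' ∧ d = d' := by
  rcases le_total d d' with hdd | hdd
  · exact ArrEq.start_unique_aux hf hs hs' hd hd' hdd h
  · obtain ⟨h1, h2⟩ := ArrEq.start_unique_aux hf hs' hs hd' hd hdd h.symm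
    exact ⟨h1.symm, h2.symm⟩

-- existence of path addresses
lemma ArrEq.addr_exists (hf : ExtLike k n f) {u : ℕ} (hu : u < k) (hp : u ∉ periodicPts f) :
    ∃ s d, ArrEq.IsStart k f s ∧ f^[d] s = u ∧ d < exitT k f s := by
  have step : ∀ u, u < k → u ∉ periodicPts f → ¬ ArrEq.IsStart k f u →
      ∃ w, w < k ∧ w ∉ periodicPts f ∧ exitT k f w = exitT k f u + 1 ∧ f w = u := by
    intro u hu hp hns
    rw [ArrEq.IsStart, not_and] at hns
    have h2 := hns hu
    push_neg at h2
    obtain ⟨w, hw, hfw⟩ := h2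
    have hwp : w ∉ periodicPts f := by
      intro hwp
      exact hp (by rw [← hfw]; obtain ⟨m, hm0, hmp⟩ := hwp; exact ⟨m, hm0, hmp.apply⟩)
    refine ⟨w, hw, hwp, ?_, hfw⟩
    have hit : ∀ ℓ, f^[ℓ + 1] w = f^[ℓ] u := by
      intro ℓ
      rw [Function.iterate_succ_apply, hfw]
    apply le_antisymm
    · exact ArrEq.exit_le hf (by rw [hit]; exact ArrEq.exit_spec hf hu hp)
    · apply Nat.succ_le_of_lt
      rcases Nat.lt_or_ge (exitT k f u) (exitT k f w) with h | h
      · exact h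
      · exfalso
        -- exitT w ≤ exitT u, so f^[exitT w] w ≥ k but also... 
        have h1 : k ≤ f^[exitT k f w] w := ArrEq.exit_spec hf hw hwp
        rcases Nat.eq_zero_or_pos (exitT k f w) with h0 | h0
        · rw [h0] at h1; simp at h1; omega
        · have h2 : f^[exitT k f w] w = f^[exitT k f w - 1] u := by
            rw [← hit, show exitT k f w - 1 + 1 = exitT k f w by omega]
          rw [h2] at h1
          have := ArrEq.exit_lt_of hf (u := u) (d := exitT k f w - 1) (by omega)
          omega
  -- induction on k - exitT u
  have main : ∀ m u, u < k → u ∉ periodicPts f → k - exitT k f u ≤ m →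
      ∃ s d, ArrEq.IsStart k f s ∧ f^[d] s = u ∧ d < exitT k f s := by
    intro m
    induction m with
    | zero =>
      intro u hu hp hm
      by_cases hns : ArrEq.IsStart k f u
      · exact ⟨u, 0, hns, rfl, ArrEq.exit_pos hf hu hp⟩
      · exfalso
        obtain ⟨w, hw, hwp, hex, -⟩ := step u hu hp hns
        have := ArrEq.exit_le_k hf hw hwp
        omega
    | succ m ih =>
      intro u hu hp hm
      by_cases hns : ArrEq.IsStart k f u
      · exact ⟨u, 0, hns, rfl, ArrEq.exit_pos hf hu hp⟩
      · obtain ⟨w, hw, hwp, hex, hfw⟩ := step u hu hp hns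
        have hk : exitT k f w ≤ k := ArrEq.exit_le_k hf hw hwp
        obtain ⟨s, d, hss, hsd, hsd'⟩ := ih w hw hwp (by omega)
        refine ⟨s, d + 1, hss, ?_, ?_⟩
        · rw [Function.iterate_succ_apply', hsd, hfw]
        · -- f^[d+1] s = u < k so d+1 < exitT s
          by_contra hcon
          push_neg at hcon
          have h1 : k ≤ f^[exitT k f s] s := ArrEq.exit_spec hf hss.1 (ArrEq.start_np hf hss)
          have h2 := ArrEq.iter_ge hf h1 hcon
          rw [Function.iterate_succ_apply', hsd, hfw] at h2
          omega
  exact main (k - exitT k f u) u hu hp le_rfl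

lemma ArrEq.endpoint_addr (hf : ExtLike k n f) {v w : ℕ} (hv : k ≤ v) (hw : w < k)
    (hfw : f w = v) : ∃ s, ArrEq.IsStart k f s ∧ f^[exitT k f s] s = v ∧ exitT k f s ≤ k := by
  have hwp : w ∉ periodicPts f := by
    intro hwp
    have := ArrEq.orbit_lt hf hw hwp 1
    simp only [Function.iterate_one] at this
    omega
  obtain ⟨s, d, hs, hsd, hsd'⟩ := ArrEq.addr_exists hf hw hwp
  have h1 : f^[d + 1] s = v := by rw [Function.iterate_succ_apply', hsd, hfw]
  have h2 : exitT k f s ≤ d + 1 := ArrEq.exit_le hf (by rw [h1]; exact hv)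
  have h3 : exitT k f s = d + 1 := by omega
  refine ⟨s, hs, by rw [h3]; exact h1, ?_⟩
  have := ArrEq.exit_le_k hf hs.1 (ArrEq.start_np hf hs)
  omega
end

section
variable {k n : ℕ} {f g : ℕ → ℕ}
open Function

noncomputable def ArrEq.repOf (f : ℕ → ℕ) (u : ℕ) : ℕ := sInf {v : ℕ | ∃ j, f^[j] u = v}

lemma ArrEq.rep_exists (f : ℕ → ℕ) (u : ℕ) : ∃ a, f^[a] u = ArrEq.repOf f u :=
  Nat.sInf_mem (⟨u, 0, rfl⟩ : {v : ℕ | ∃ j, f^[j] u = v}.Nonempty)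

lemma ArrEq.rep_min (f : ℕ → ℕ) (u : ℕ) {v : ℕ} (h : ∃ j, f^[j] u = v) :
    ArrEq.repOf f u ≤ v := Nat.sInf_le h

lemma ArrEq.rep_periodic {u : ℕ} (hp : u ∈ periodicPts f) :
    ArrEq.repOf f u ∈ periodicPts f := by
  obtain ⟨a, ha⟩ := ArrEq.rep_exists f u
  obtain ⟨m, hm0, hmp⟩ := hp
  exact ⟨m, hm0, by rw [← ha]; exact hmp.apply_iterate a⟩

lemma ArrEq.rep_mp {u : ℕ} (hp : u ∈ periodicPts f) :
    minimalPeriod f (ArrEq.repOf f u) = minimalPeriod f u := by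
  obtain ⟨a, ha⟩ := ArrEq.rep_exists f u
  rw [← ha]
  exact minimalPeriod_apply_iterate hp a

lemma ArrEq.rep_lt (hf : ExtLike k n f) {u : ℕ} (hu : u < k) (hp : u ∈ periodicPts f) :
    ArrEq.repOf f u < k := by
  obtain ⟨a, ha⟩ := ArrEq.rep_exists f u
  rw [← ha]
  exact ArrEq.orbit_lt hf hu hp a

lemma ArrEq.rep_le_iter {u : ℕ} (j : ℕ) :
    ArrEq.repOf f u ≤ f^[j] (ArrEq.repOf f u) := by
  obtain ⟨a, ha⟩ := ArrEq.rep_exists f u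
  apply ArrEq.rep_min
  exact ⟨j + a, by rw [Function.iterate_add_apply, ha]⟩

lemma ArrEq.rep_pos_exists {u : ℕ} (hp : u ∈ periodicPts f) :
    ∃ d, d < minimalPeriod f u ∧ f^[d] (ArrEq.repOf f u) = u := by
  have hmp : 0 < minimalPeriod f u := minimalPeriod_pos_of_mem_periodicPts hp
  set i := minimalPeriod f u with hi
  obtain ⟨a, ha⟩ := ArrEq.rep_exists f u
  rcases Nat.eq_zero_or_pos (a % i) with h0 | h0
  · refine ⟨0, hmp, ?_⟩
    have : f^[a % i] u = f^[a] u := iterate_mod_minimalPeriod_eq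
    rw [h0] at this
    simp only [Function.iterate_zero_apply] at this
    simp [← ha, ← this]
  · refine ⟨i - a % i, by omega, ?_⟩
    rw [← ha, ← Function.iterate_add_apply]
    have hd : i - a % i + a = i * (a / i + 1) := by
      have e1 := Nat.div_add_mod a i
      have e2 : i * (a / i + 1) = i * (a / i) + i := by ring
      have e3 := Nat.mod_lt a (y := i) hmp
      omega
    have hmod : (i - a % i + a) % i = 0 := by rw [hd]; exact Nat.mul_mod_right _ _
    calc f^[i - a % i + a] u = f^[(i - a % i + a) % i] u := by
          rw [iterate_mod_minimalPeriod_eq]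
    _ = u := by rw [hmod]; simp

lemma ArrEq.cyc_unique {r r' d d' : ℕ} (hr : ∀ j, r ≤ f^[j] r) (hr' : ∀ j, r' ≤ f^[j] r')
    (hrp : r ∈ periodicPts f) (hrp' : r' ∈ periodicPts f) (hd : d < minimalPeriod f r)
    (hd' : d' < minimalPeriod f r') (h : f^[d] r = f^[d'] r') : r = r' ∧ d = d' := by
  have hi : minimalPeriod f r = minimalPeriod f r' := by
    rw [← minimalPeriod_apply_iterate hrp d, h, minimalPeriod_apply_iterate hrp' d']
  have h1 : r' = f^[minimalPeriod f r' - d' + d] r := by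
    rw [Function.iterate_add_apply, h, ← Function.iterate_add_apply,
      show minimalPeriod f r' - d' + d' = minimalPeriod f r' by omega]
    exact (isPeriodicPt_minimalPeriod f r').symm
  have h2 : r = f^[minimalPeriod f r - d + d'] r' := by
    rw [Function.iterate_add_apply, ← h, ← Function.iterate_add_apply,
      show minimalPeriod f r - d + d = minimalPeriod f r by omega]
    exact (isPeriodicPt_minimalPeriod f r).symm
  have hrr : r = r' := le_antisymm (h1 ▸ hr _) (h2 ▸ hr' _)
  subst hrr
  refine ⟨rfl, ?_⟩
  exact iterate_injOn_Iio_minimalPeriod (Set.mem_Iio.2 hd) (Set.mem_Iio.2 (hi ▸ hd')) h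

lemma ArrEq.period_le_k (hf : ExtLike k n f) {u : ℕ} (hu : u < k) (hp : u ∈ periodicPts f) :
    minimalPeriod f u ≤ k := by
  have hinj : Function.Injective (fun j : Fin (minimalPeriod f u) =>
      (⟨f^[j.1] u, ArrEq.orbit_lt hf hu hp j.1⟩ : Fin k)) := by
    intro a b hab
    have : f^[a.1] u = f^[b.1] u := congrArg Fin.val hab
    exact Fin.ext (iterate_injOn_Iio_minimalPeriod (Set.mem_Iio.2 a.2) (Set.mem_Iio.2 b.2) this)
  simpa using Fintype.card_le_of_injective _ hinj
end

section
variable {k n : ℕ} {f g : ℕ → ℕ}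
open Function

def ArrEq.PerSub (k : ℕ) (f : ℕ → ℕ) (i : ℕ) :=
  {u : ℕ // u < k ∧ Function.minimalPeriod f u = i}
def ArrEq.StartSub (k : ℕ) (f : ℕ → ℕ) (i : ℕ) :=
  {u : ℕ // u < k ∧ (∀ w, w < k → f w ≠ u) ∧ sInf {ℓ : ℕ | k ≤ f^[ℓ] u} = i}
def ArrEq.RepSub (k : ℕ) (f : ℕ → ℕ) (i : ℕ) :=
  {u : ℕ // (u < k ∧ Function.minimalPeriod f u = i) ∧ ∀ j, u ≤ f^[j] u}
def ArrEq.IsoSub (k n : ℕ) (f : ℕ → ℕ) :=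
  {v : ℕ // (k ≤ v ∧ v < n) ∧ ∀ w, w < k → f w ≠ v}

lemma ArrEq.finite_bdd {P : ℕ → Prop} {m : ℕ} (h : ∀ u, P u → u < m) :
    Finite {u : ℕ // P u} :=
  Finite.of_injective (fun x => (⟨x.1, h x.1 x.2⟩ : Fin m))
    (fun a b hab => Subtype.ext (congrArg Fin.val hab))

instance : Finite (ArrEq.PerSub k f i) := ArrEq.finite_bdd (fun _ hu => hu.1)
instance : Finite (ArrEq.StartSub k f i) := ArrEq.finite_bdd (fun _ hu => hu.1)
instance : Finite (ArrEq.RepSub k f i) := ArrEq.finite_bdd (fun _ hu => hu.1.1)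
instance : Finite (ArrEq.IsoSub k n f) := ArrEq.finite_bdd (fun _ hu => hu.1.2)

def ArrEq.AddrT (k n : ℕ) (f : ℕ → ℕ) :=
  ((Σ i : Fin (k+1), ArrEq.RepSub k f i.1 × Fin i.1) ⊕
   (Σ i : Fin (k+1), ArrEq.StartSub k f i.1 × Fin (i.1+1))) ⊕ ArrEq.IsoSub k n f

instance : Finite (ArrEq.AddrT k n f) := by
  unfold ArrEq.AddrT; infer_instance

def ArrEq.decN : ArrEq.AddrT k n f → ℕ
  | .inl (.inl ⟨_, r, d⟩) => f^[d.1] r.1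
  | .inl (.inr ⟨_, s, d⟩) => f^[d.1] s.1
  | .inr v => v.1

lemma ArrEq.iter_exp_congr (f : ℕ → ℕ) {a b : ℕ} (h : a = b) (x : ℕ) :
    f^[a] x = f^[b] x := by rw [h]

-- basic facts about components
lemma ArrEq.rep_per {i : ℕ} (r : ArrEq.RepSub k f i) (hi : 0 < i) : r.1 ∈ periodicPts f :=
  minimalPeriod_pos_iff_mem_periodicPts.1 (by rw [r.2.1.2]; exact hi)

lemma ArrEq.start_isStart {i : ℕ} (s : ArrEq.StartSub k f i) : ArrEq.IsStart k f s.1 :=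
  ⟨s.2.1, s.2.2.1⟩

lemma ArrEq.start_exit {i : ℕ} (s : ArrEq.StartSub k f i) : exitT k f s.1 = i := s.2.2.2

lemma ArrEq.cyc_pt_lt (hf : ExtLike k n f) {i : ℕ} (r : ArrEq.RepSub k f i) (d : Fin i) :
    f^[d.1] r.1 < k :=
  ArrEq.orbit_lt hf r.2.1.1 (ArrEq.rep_per r (Nat.lt_of_le_of_lt (Nat.zero_le d.1) d.2)) d.1

lemma ArrEq.cyc_pt_per (hf : ExtLike k n f) {i : ℕ} (r : ArrEq.RepSub k f i) (d : Fin i) :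
    f^[d.1] r.1 ∈ periodicPts f := by
  obtain ⟨m, hm0, hmp⟩ := ArrEq.rep_per r (Nat.lt_of_le_of_lt (Nat.zero_le d.1) d.2)
  exact ⟨m, hm0, hmp.apply_iterate d.1⟩

lemma ArrEq.path_pt_lt (hf : ExtLike k n f) {i : ℕ} (s : ArrEq.StartSub k f i)
    {d : ℕ} (hd : d < i) : f^[d] s.1 < k :=
  ArrEq.exit_lt_of hf (by rw [ArrEq.start_exit s]; exact hd)

lemma ArrEq.path_pt_np (hf : ExtLike k n f) {i : ℕ} (s : ArrEq.StartSub k f i)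
    {d : ℕ} (hd : d < i) : f^[d] s.1 ∉ periodicPts f :=
  ArrEq.path_not_periodic hf s.2.1 s.2.2.1 d
    (fun c hc => ArrEq.path_pt_lt hf s (by omega))

lemma ArrEq.path_end_ge (hf : ExtLike k n f) {i : ℕ} (s : ArrEq.StartSub k f i) :
    k ≤ f^[i] s.1 := by
  have := ArrEq.exit_spec hf s.2.1 (ArrEq.start_np hf (ArrEq.start_isStart s))
  rwa [ArrEq.start_exit s] at this

lemma ArrEq.path_pt_lt_n (hf : ExtLike k n f) {i : ℕ} (s : ArrEq.StartSub k f i)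
    {d : ℕ} (hd : d ≤ i) : f^[d] s.1 < n := by
  rcases Nat.lt_or_ge d i with h | h
  · exact lt_of_lt_of_le (ArrEq.path_pt_lt hf s h) hf.le
  · have hdi : d = i := by omega
    have hend : f^[i] s.1 < n := by
      rcases Nat.eq_zero_or_pos i with h0 | h0
      · rw [ArrEq.iter_exp_congr f h0]
        simpa using lt_of_lt_of_le s.2.1 hf.le
      · have h2 : f^[i] s.1 = f (f^[i-1] s.1) := by
          rw [ArrEq.iter_exp_congr f (show i = (i-1)+1 by omega),
            Function.iterate_succ_apply']
        rw [h2]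
        exact hf.lt _ (ArrEq.path_pt_lt hf s (by omega))
    rw [ArrEq.iter_exp_congr f hdi]
    exact hend

lemma ArrEq.decN_lt (hf : ExtLike k n f) : ∀ a : ArrEq.AddrT k n f, ArrEq.decN a < n := by
  rintro ((⟨i, r, d⟩ | ⟨i, s, d⟩) | v)
  · exact lt_of_lt_of_le (ArrEq.cyc_pt_lt hf r d) hf.le
  · exact ArrEq.path_pt_lt_n hf s (by omega)
  · exact v.2.1.2

lemma ArrEq.decN_inj (hf : ExtLike k n f) : Function.Injective (ArrEq.decN (k := k) (n := n) (f := f)) := by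
  rintro ((⟨i, r, d⟩ | ⟨i, s, d⟩) | v) ((⟨i', r', d'⟩ | ⟨i', s', d'⟩) | v') h <;>
    simp only [ArrEq.decN] at h
  · -- Cyc Cyc
    have h1 := ArrEq.cyc_unique (f := f) r.2.2 r'.2.2
      (ArrEq.rep_per r (Nat.lt_of_le_of_lt (Nat.zero_le d.1) d.2))
      (ArrEq.rep_per r' (Nat.lt_of_le_of_lt (Nat.zero_le d'.1) d'.2)) (by rw [r.2.1.2]; exact d.2) (by rw [r'.2.1.2]; exact d'.2) h
    have hii : i = i' := by
      apply Fin.ext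
      rw [← r.2.1.2, ← r'.2.1.2, h1.1]
    subst hii
    have hr : r = r' := Subtype.ext h1.1
    have hd : d = d' := Fin.ext h1.2
    rw [hr, hd]
  · -- Cyc Path
    exfalso
    rcases Nat.lt_or_ge d'.1 i'.1 with hlt | hge
    · exact ArrEq.path_pt_np hf s' hlt (h ▸ ArrEq.cyc_pt_per hf r d)
    · have h1 : d'.1 = i'.1 := by omega
      have h2 : k ≤ f^[d'.1] s'.1 := by
        rw [ArrEq.iter_exp_congr f h1]
        exact ArrEq.path_end_ge hf s'
      have := ArrEq.cyc_pt_lt hf r d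
      omega
  · -- Cyc Iso
    exfalso
    have := ArrEq.cyc_pt_lt hf r d
    have := v'.2.1.1
    omega
  · -- Path Cyc
    exfalso
    rcases Nat.lt_or_ge d.1 i.1 with hlt | hge
    · exact ArrEq.path_pt_np hf s hlt (h.symm ▸ ArrEq.cyc_pt_per hf r' d')
    · have h1 : d.1 = i.1 := by omega
      have h2 : k ≤ f^[d.1] s.1 := by
        rw [ArrEq.iter_exp_congr f h1]
        exact ArrEq.path_end_ge hf s
      have := ArrEq.cyc_pt_lt hf r' d'
      omega
  · -- Path Path
    have h1 := ArrEq.start_unique hf (ArrEq.start_isStart s) (ArrEq.start_isStart s')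
      (by rw [ArrEq.start_exit s]; omega) (by rw [ArrEq.start_exit s']; omega) h
    have hii : i = i' := by
      apply Fin.ext
      rw [← ArrEq.start_exit s, ← ArrEq.start_exit s', h1.1]
    subst hii
    have hs : s = s' := Subtype.ext h1.1
    have hd : d = d' := Fin.ext h1.2
    rw [hs, hd]
  · -- Path Iso
    exfalso
    rcases Nat.lt_or_ge d.1 i.1 with hlt | hge
    · have := ArrEq.path_pt_lt hf s hlt
      have := v'.2.1.1
      omega
    · have h1 : d.1 = i.1 := by omega
      -- endpoint has preimage but Iso does not
      have hipos : 0 < i.1 := by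
        rcases Nat.eq_zero_or_pos i.1 with h0 | h0
        · exfalso
          have h3 : k ≤ f^[0] s.1 := by
            rw [← ArrEq.iter_exp_congr f h0]
            exact ArrEq.path_end_ge hf s
          simp only [Function.iterate_zero_apply] at h3
          have := s.2.1
          omega
        · exact h0
      apply v'.2.2 (f^[i.1 - 1] s.1) (ArrEq.path_pt_lt hf s (by omega))
      calc f (f^[i.1 - 1] s.1) = f^[i.1 - 1 + 1] s.1 :=
          (Function.iterate_succ_apply' f _ _).symm
      _ = f^[d.1] s.1 := ArrEq.iter_exp_congr f (by omega) _
      _ = v'.1 := h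
  · -- Iso Cyc
    exfalso
    have := ArrEq.cyc_pt_lt hf r' d'
    have := v.2.1.1
    omega
  · -- Iso Path
    exfalso
    rcases Nat.lt_or_ge d'.1 i'.1 with hlt | hge
    · have := ArrEq.path_pt_lt hf s' hlt
      have := v.2.1.1
      omega
    · have h1 : d'.1 = i'.1 := by omega
      have hipos : 0 < i'.1 := by
        rcases Nat.eq_zero_or_pos i'.1 with h0 | h0
        · exfalso
          have h3 : k ≤ f^[0] s'.1 := by
            rw [← ArrEq.iter_exp_congr f h0]
            exact ArrEq.path_end_ge hf s'
          simp only [Function.iterate_zero_apply] at h3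
          have := s'.2.1
          omega
        · exact h0
      apply v.2.2 (f^[i'.1 - 1] s'.1) (ArrEq.path_pt_lt hf s' (by omega))
      calc f (f^[i'.1 - 1] s'.1) = f^[i'.1 - 1 + 1] s'.1 :=
          (Function.iterate_succ_apply' f _ _).symm
      _ = f^[d'.1] s'.1 := ArrEq.iter_exp_congr f (by omega) _
      _ = v.1 := h.symm
  · -- Iso Iso
    exact congrArg Sum.inr (Subtype.ext h)

lemma ArrEq.decN_surj (hf : ExtLike k n f) {u : ℕ} (hu : u < n) :
    ∃ a : ArrEq.AddrT k n f, ArrEq.decN a = u := by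
  rcases Nat.lt_or_ge u k with huk | huk
  · by_cases hp : u ∈ periodicPts f
    · have hi1 : 0 < minimalPeriod f u := minimalPeriod_pos_of_mem_periodicPts hp
      have hik : minimalPeriod f u ≤ k := ArrEq.period_le_k hf huk hp
      obtain ⟨d, hd, hdu⟩ := ArrEq.rep_pos_exists hp
      refine ⟨.inl (.inl ⟨⟨minimalPeriod f u, by omega⟩,
        ⟨ArrEq.repOf f u, ⟨⟨ArrEq.rep_lt hf huk hp, ArrEq.rep_mp hp⟩,
          fun j => ArrEq.rep_le_iter j⟩⟩, ⟨d, hd⟩⟩), hdu⟩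
    · obtain ⟨s, d, hs, hsd, hsd'⟩ := ArrEq.addr_exists hf huk hp
      have hk : exitT k f s ≤ k := ArrEq.exit_le_k hf hs.1 (ArrEq.start_np hf hs)
      refine ⟨.inl (.inr ⟨⟨exitT k f s, by omega⟩,
        ⟨s, hs.1, hs.2, rfl⟩, ⟨d, show d < exitT k f s + 1 by omega⟩⟩), hsd⟩
  · by_cases hpre : ∃ w, w < k ∧ f w = u
    · obtain ⟨w, hw, hfw⟩ := hpre
      obtain ⟨s, hs, hse, hsk⟩ := ArrEq.endpoint_addr hf huk hw hfw
      refine ⟨.inl (.inr ⟨⟨exitT k f s, by omega⟩,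
        ⟨s, hs.1, hs.2, rfl⟩, ⟨exitT k f s, show exitT k f s < exitT k f s + 1 by omega⟩⟩), hse⟩
    · push_neg at hpre
      exact ⟨.inr ⟨u, ⟨huk, hu⟩, fun w hw => hpre w hw⟩, rfl⟩
end

section
variable {k n : ℕ} {f g : ℕ → ℕ}
open Function

noncomputable def ArrEq.ecyc (e : ∀ i, 0 < i → (ArrEq.RepSub k f i ≃ ArrEq.RepSub k g i))
    (i : ℕ) : (ArrEq.RepSub k f i × Fin i) ≃ (ArrEq.RepSub k g i × Fin i) :=
  if hi : 0 < i then (e i hi).prodCongr (Equiv.refl _)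
  else
    haveI h1 : IsEmpty (Fin i) := ⟨fun d => hi (Nat.lt_of_le_of_lt (Nat.zero_le d.1) d.2)⟩
    haveI h2 : IsEmpty (ArrEq.RepSub k f i × Fin i) := ⟨fun p => h1.false p.2⟩
    haveI h3 : IsEmpty (ArrEq.RepSub k g i × Fin i) := ⟨fun p => h1.false p.2⟩
    Equiv.equivOfIsEmpty _ _

lemma ArrEq.ecyc_apply (e : ∀ i, 0 < i → (ArrEq.RepSub k f i ≃ ArrEq.RepSub k g i))
    (i : ℕ) (r : ArrEq.RepSub k f i) (d : Fin i) :
    ArrEq.ecyc e i (r, d) =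
      (e i (Nat.lt_of_le_of_lt (Nat.zero_le d.1) d.2) r, d) := by
  have hi : 0 < i := Nat.lt_of_le_of_lt (Nat.zero_le d.1) d.2
  simp only [ArrEq.ecyc, dif_pos hi]
  rfl

variable (e : ∀ i, 0 < i → (ArrEq.RepSub k f i ≃ ArrEq.RepSub k g i))
  (eS : ∀ i, ArrEq.StartSub k f i ≃ ArrEq.StartSub k g i)
  (eI : ArrEq.IsoSub k n f ≃ ArrEq.IsoSub k n g)

noncomputable def ArrEq.transA : ArrEq.AddrT k n f ≃ ArrEq.AddrT k n g :=
  Equiv.sumCongr (Equiv.sumCongr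
    (Equiv.sigmaCongrRight fun i => ArrEq.ecyc e i.1)
    (Equiv.sigmaCongrRight fun i => (eS i.1).prodCongr (Equiv.refl _))) eI

lemma ArrEq.transA_cyc (i : Fin (k+1)) (r : ArrEq.RepSub k f i.1) (d : Fin i.1) :
    ArrEq.transA (n := n) e eS eI (.inl (.inl ⟨i, r, d⟩)) =
      .inl (.inl ⟨i, (e i.1 (Nat.lt_of_le_of_lt (Nat.zero_le d.1) d.2) r, d)⟩) := by
  have h1 : ArrEq.transA (n := n) e eS eI (.inl (.inl ⟨i, r, d⟩)) =
      .inl (.inl ⟨i, ArrEq.ecyc e i.1 (r, d)⟩) := rfl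
  rw [h1, ArrEq.ecyc_apply]

lemma ArrEq.transA_path (i : Fin (k+1)) (s : ArrEq.StartSub k f i.1) (d : Fin (i.1+1)) :
    ArrEq.transA (n := n) e eS eI (.inl (.inr ⟨i, s, d⟩)) =
      .inl (.inr ⟨i, (eS i.1 s, d)⟩) := rfl

lemma ArrEq.transA_iso (v : ArrEq.IsoSub k n f) :
    ArrEq.transA (n := n) e eS eI (.inr v) = .inr (eI v) := rfl

noncomputable def ArrEq.eDec (hf : ExtLike k n f) : ArrEq.AddrT k n f ≃ {u : ℕ // u < n} :=
  Equiv.ofBijective (fun a => ⟨ArrEq.decN a, ArrEq.decN_lt hf a⟩)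
    ⟨fun a b h => ArrEq.decN_inj hf (congrArg Subtype.val h),
     fun u => (ArrEq.decN_surj hf u.2).imp fun a ha => Subtype.ext ha⟩

lemma ArrEq.eDec_val (hf : ExtLike k n f) (a : ArrEq.AddrT k n f) :
    (ArrEq.eDec hf a).1 = ArrEq.decN a := rfl

variable (hf : ExtLike k n f) (hg : ExtLike k n g)

noncomputable def ArrEq.sigmaF : ℕ → ℕ :=
  fun u => if h : u < n then
    (ArrEq.eDec hg (ArrEq.transA e eS eI ((ArrEq.eDec hf).symm ⟨u, h⟩))).1
  else u

lemma ArrEq.sigmaF_pos {u : ℕ} (h : u < n) :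
    ArrEq.sigmaF e eS eI hf hg u
      = (ArrEq.eDec hg (ArrEq.transA e eS eI ((ArrEq.eDec hf).symm ⟨u, h⟩))).1 := by
  simp only [ArrEq.sigmaF, dif_pos h]

lemma ArrEq.sigmaF_fix {u : ℕ} (h : n ≤ u) : ArrEq.sigmaF e eS eI hf hg u = u := by
  simp only [ArrEq.sigmaF, dif_neg (by omega : ¬ u < n)]

lemma ArrEq.sigmaF_key (a : ArrEq.AddrT k n f) :
    ArrEq.sigmaF e eS eI hf hg (ArrEq.decN a) = ArrEq.decN (ArrEq.transA e eS eI a) := by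
  have h1 : ArrEq.decN (f := f) a < n := ArrEq.decN_lt hf a
  rw [ArrEq.sigmaF_pos e eS eI hf hg h1]
  have h2 : (⟨ArrEq.decN a, h1⟩ : {u : ℕ // u < n}) = ArrEq.eDec hf a := rfl
  rw [h2, Equiv.symm_apply_apply, ArrEq.eDec_val]

lemma ArrEq.sigmaF_lt {u : ℕ} (h : u < n) : ArrEq.sigmaF e eS eI hf hg u < n := by
  rw [ArrEq.sigmaF_pos e eS eI hf hg h]
  exact (ArrEq.eDec hg _).2

lemma ArrEq.sigmaF_decomp {u : ℕ} (h : u < n) :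
    ∃ a : ArrEq.AddrT k n f, ArrEq.decN a = u ∧
      ArrEq.sigmaF e eS eI hf hg u = ArrEq.decN (ArrEq.transA e eS eI a) := by
  refine ⟨(ArrEq.eDec hf).symm ⟨u, h⟩, ?_, ?_⟩
  · have := congrArg Subtype.val (Equiv.apply_symm_apply (ArrEq.eDec hf) ⟨u, h⟩)
    rwa [ArrEq.eDec_val] at this
  · rw [ArrEq.sigmaF_pos e eS eI hf hg h, ArrEq.eDec_val]

lemma ArrEq.sigmaF_inv : ∀ u,
    ArrEq.sigmaF (fun i hi => (e i hi).symm) (fun i => (eS i).symm) eI.symm hg hf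
      (ArrEq.sigmaF e eS eI hf hg u) = u := by
  intro u
  by_cases h : u < n
  · rw [ArrEq.sigmaF_pos e eS eI hf hg h]
    set b := ArrEq.transA e eS eI ((ArrEq.eDec hf).symm ⟨u, h⟩) with hb
    have h2 : (ArrEq.eDec hg b).1 < n := (ArrEq.eDec hg b).2
    rw [ArrEq.sigmaF_pos _ _ _ hg hf h2]
    have h3 : (⟨(ArrEq.eDec hg b).1, h2⟩ : {u : ℕ // u < n}) = ArrEq.eDec hg b := rfl
    rw [h3, Equiv.symm_apply_apply]
    have h4 : ArrEq.transA (fun i hi => (e i hi).symm) (fun i => (eS i).symm) eI.symm b =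
        (ArrEq.eDec hf).symm ⟨u, h⟩ := by
      rw [hb]
      rcases (ArrEq.eDec hf).symm ⟨u, h⟩ with ((⟨i, r, d⟩ | ⟨i, s, d⟩) | v)
      · rw [ArrEq.transA_cyc, ArrEq.transA_cyc]
        simp only [Equiv.symm_apply_apply]
        rfl
      · rw [ArrEq.transA_path, ArrEq.transA_path]
        simp only [Equiv.symm_apply_apply]
        rfl
      · rw [ArrEq.transA_iso, ArrEq.transA_iso, Equiv.symm_apply_apply]
    rw [h4]
    have := congrArg Subtype.val (Equiv.apply_symm_apply (ArrEq.eDec hf) ⟨u, h⟩)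
    rwa [ArrEq.eDec_val] at this
  · rw [show ArrEq.sigmaF e eS eI hf hg u = u by simp only [ArrEq.sigmaF, dif_neg h]]
    simp only [ArrEq.sigmaF, dif_neg h]

lemma ArrEq.sigmaF_bij : Function.Bijective (ArrEq.sigmaF e eS eI hf hg) := by
  have h1 := ArrEq.sigmaF_inv e eS eI hf hg
  have h2 := ArrEq.sigmaF_inv (fun i hi => (e i hi).symm) (fun i => (eS i).symm) eI.symm hg hf
  have h3 : ∀ u, ArrEq.sigmaF e eS eI hf hg
      (ArrEq.sigmaF (fun i hi => (e i hi).symm) (fun i => (eS i).symm) eI.symm hg hf u) = u := by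
    have : ∀ i hi, ((e i hi).symm).symm = e i hi := fun i hi => Equiv.symm_symm _
    intro u
    have := h2 u
    simpa using this
  exact Function.bijective_iff_has_inverse.2 ⟨_, h1, h3⟩
end

section
variable {k n : ℕ} {f g : ℕ → ℕ}
  (e : ∀ i, 0 < i → (ArrEq.RepSub k f i ≃ ArrEq.RepSub k g i))
  (eS : ∀ i, ArrEq.StartSub k f i ≃ ArrEq.StartSub k g i)
  (eI : ArrEq.IsoSub k n f ≃ ArrEq.IsoSub k n g)
  (hf : ArrEq.ExtLike k n f) (hg : ArrEq.ExtLike k n g)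
open Function

lemma ArrEq.sigmaF_ltk : ∀ u, u < k ↔ ArrEq.sigmaF e eS eI hf hg u < k := by
  have fwd : ∀ u, u < k → ArrEq.sigmaF e eS eI hf hg u < k := by
    intro u hu
    have hun : u < n := lt_of_lt_of_le hu hf.le
    obtain ⟨a, ha, hs⟩ := ArrEq.sigmaF_decomp e eS eI hf hg hun
    rw [hs]
    rcases a with ((⟨i, r, d⟩ | ⟨i, s, d⟩) | v)
    · rw [ArrEq.transA_cyc]
      exact ArrEq.cyc_pt_lt hg _ d
    · rcases Nat.lt_or_ge d.1 i.1 with hlt | hge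
      · rw [ArrEq.transA_path]
        exact ArrEq.path_pt_lt hg _ hlt
      · exfalso
        have hd : d.1 = i.1 := by omega
        have h2 : k ≤ f^[d.1] s.1 := by
          rw [ArrEq.iter_exp_congr f hd]
          exact ArrEq.path_end_ge hf s
        have : ArrEq.decN (n := n) (f := f) (.inl (.inr ⟨i, s, d⟩)) = f^[d.1] s.1 := rfl
        omega
    · exfalso
      have : ArrEq.decN (n := n) (f := f) (.inr v) = v.1 := rfl
      have := v.2.1.1
      omega
  have bwd : ∀ u, k ≤ u → k ≤ ArrEq.sigmaF e eS eI hf hg u := by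
    intro u hu
    rcases Nat.lt_or_ge u n with hun | hun
    · obtain ⟨a, ha, hs⟩ := ArrEq.sigmaF_decomp e eS eI hf hg hun
      rw [hs]
      rcases a with ((⟨i, r, d⟩ | ⟨i, s, d⟩) | v)
      · exfalso
        have : ArrEq.decN (n := n) (f := f) (.inl (.inl ⟨i, r, d⟩)) = f^[d.1] r.1 := rfl
        have := ArrEq.cyc_pt_lt hf r d
        omega
      · rcases Nat.lt_or_ge d.1 i.1 with hlt | hge
        · exfalso
          have : ArrEq.decN (n := n) (f := f) (.inl (.inr ⟨i, s, d⟩)) = f^[d.1] s.1 := rfl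
          have := ArrEq.path_pt_lt hf s hlt
          omega
        · have hd : d.1 = i.1 := by omega
          rw [ArrEq.transA_path]
          have h3 : ArrEq.decN (n := n) (f := g) (.inl (.inr ⟨i, eS i.1 s, d⟩)) = g^[d.1] (eS i.1 s).1 :=
            rfl
          rw [h3, ArrEq.iter_exp_congr g hd]
          exact ArrEq.path_end_ge hg _
      · rw [ArrEq.transA_iso]
        exact (eI v).2.1.1
    · rw [ArrEq.sigmaF_fix e eS eI hf hg hun]
      omega
  intro u
  constructor
  · exact fwd u
  · intro h
    by_contra hcon
    have := bwd u (by omega)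
    omega

lemma ArrEq.sigmaF_semiconj : ∀ u,
    ArrEq.sigmaF e eS eI hf hg (f u) = g (ArrEq.sigmaF e eS eI hf hg u) := by
  intro u
  rcases Nat.lt_or_ge u k with hu | hu
  · have hun : u < n := lt_of_lt_of_le hu hf.le
    obtain ⟨a, ha, hs⟩ := ArrEq.sigmaF_decomp e eS eI hf hg hun
    rcases a with ((⟨i, r, d⟩ | ⟨i, s, d⟩) | v)
    · -- cyclic point
      have hi : 0 < i.1 := Nat.lt_of_le_of_lt (Nat.zero_le d.1) d.2
      have hadec : f^[d.1] r.1 = u := ha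
      have hσu : ArrEq.sigmaF e eS eI hf hg u =
          g^[d.1] (e i.1 hi r).1 := by
        rw [hs, ArrEq.transA_cyc]; rfl
      have hfu : f u = f^[d.1+1] r.1 := by
        rw [← hadec]
        exact (Function.iterate_succ_apply' f d.1 r.1).symm
      rcases Nat.lt_or_ge (d.1+1) i.1 with hlt | hge
      · have h5 := ArrEq.sigmaF_key e eS eI hf hg (.inl (.inl ⟨i, r, ⟨d.1+1, hlt⟩⟩))
        rw [ArrEq.transA_cyc] at h5
        have h6 : ArrEq.decN (n := n) (f := f) (.inl (.inl ⟨i, r, ⟨d.1+1, hlt⟩⟩)) = f^[d.1+1] r.1 := rfl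
        rw [h6] at h5
        rw [hfu, h5, hσu]
        show g^[d.1+1] (e i.1 hi r).1 = g (g^[d.1] (e i.1 hi r).1)
        exact Function.iterate_succ_apply' g _ _
      · have hd1 : d.1 + 1 = i.1 := by omega
        have hper : f^[d.1+1] r.1 = r.1 := by
          rw [ArrEq.iter_exp_congr f (show d.1+1 = minimalPeriod f r.1 by
            rw [r.2.1.2]; exact hd1)]
          exact iterate_minimalPeriod
        have h5 := ArrEq.sigmaF_key e eS eI hf hg (.inl (.inl ⟨i, r, ⟨0, hi⟩⟩))
        rw [ArrEq.transA_cyc] at h5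
        have h6 : ArrEq.decN (n := n) (f := f) (.inl (.inl ⟨i, r, ⟨0, hi⟩⟩)) = r.1 := rfl
        rw [h6] at h5
        rw [hfu, hper, h5, hσu]
        show g^[0] (e i.1 hi r).1 = g (g^[d.1] (e i.1 hi r).1)
        have h7 : g (g^[d.1] (e i.1 hi r).1) = g^[d.1+1] (e i.1 hi r).1 :=
          (Function.iterate_succ_apply' g _ _).symm
        rw [h7, ArrEq.iter_exp_congr g (show d.1+1 = minimalPeriod g (e i.1 hi r).1 by
          rw [(e i.1 hi r).2.1.2]; exact hd1)]
        simp
    · -- path point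
      rcases Nat.lt_or_ge d.1 i.1 with hlt | hge
      · have hadec : f^[d.1] s.1 = u := ha
        have hσu : ArrEq.sigmaF e eS eI hf hg u = g^[d.1] (eS i.1 s).1 := by
          rw [hs, ArrEq.transA_path]; rfl
        have hfu : f u = f^[d.1+1] s.1 := by
          rw [← hadec]
          exact (Function.iterate_succ_apply' f d.1 s.1).symm
        have h5 := ArrEq.sigmaF_key e eS eI hf hg
          (.inl (.inr ⟨i, s, ⟨d.1+1, by omega⟩⟩))
        rw [ArrEq.transA_path] at h5
        have h6 : ArrEq.decN (n := n) (f := f) (.inl (.inr ⟨i, s, ⟨d.1+1, by omega⟩⟩))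
            = f^[d.1+1] s.1 := rfl
        rw [h6] at h5
        rw [hfu, h5, hσu]
        show g^[d.1+1] (eS i.1 s).1 = g (g^[d.1] (eS i.1 s).1)
        exact Function.iterate_succ_apply' g _ _
      · exfalso
        have hd : d.1 = i.1 := by omega
        have h2 : k ≤ f^[d.1] s.1 := by
          rw [ArrEq.iter_exp_congr f hd]
          exact ArrEq.path_end_ge hf s
        have : f^[d.1] s.1 = u := ha
        omega
    · exfalso
      have : v.1 = u := ha
      have := v.2.1.1
      omega
  · -- u ≥ k
    have hfufix : f u = u := hf.fix u hu
    have hσk : k ≤ ArrEq.sigmaF e eS eI hf hg u := by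
      by_contra hcon
      push_neg at hcon
      have := (ArrEq.sigmaF_ltk e eS eI hf hg u).2 hcon
      omega
    rw [hfufix, hg.fix _ hσk]
end

section
variable {k n : ℕ} {f g : ℕ → ℕ}
open Function

lemma ArrEq.equiv_of_card {α β : Type} [Finite α] [Finite β]
    (h : Nat.card α = Nat.card β) : Nonempty (α ≃ β) := by
  cases nonempty_fintype α
  cases nonempty_fintype β
  rw [Nat.card_eq_fintype_card, Nat.card_eq_fintype_card] at h
  exact Fintype.card_eq.1 h

lemma ArrEq.card_per (hf : ExtLike k n f) {i : ℕ} (hi : 0 < i) :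
    Nat.card (ArrEq.PerSub k f i) = Nat.card (ArrEq.RepSub k f i) * i := by
  have hper : ∀ r : ArrEq.RepSub k f i, r.1 ∈ periodicPts f := by
    intro r
    exact minimalPeriod_pos_iff_mem_periodicPts.1 (by rw [r.2.1.2]; exact hi)
  have hbij : Function.Bijective (fun p : ArrEq.RepSub k f i × Fin i =>
      (⟨f^[p.2.1] p.1.1, ArrEq.orbit_lt hf p.1.2.1.1 (hper p.1) p.2.1,
        by rw [minimalPeriod_apply_iterate (hper p.1) p.2.1]; exact p.1.2.1.2⟩ :
        ArrEq.PerSub k f i)) := by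
    constructor
    · rintro ⟨r, d⟩ ⟨r', d'⟩ h
      have hval : f^[d.1] r.1 = f^[d'.1] r'.1 := congrArg Subtype.val h
      have h1 := ArrEq.cyc_unique (f := f) r.2.2 r'.2.2 (hper r) (hper r')
        (by rw [r.2.1.2]; exact d.2) (by rw [r'.2.1.2]; exact d'.2) hval
      exact Prod.ext (Subtype.ext h1.1) (Fin.ext h1.2)
    · rintro ⟨u, hu, hmp⟩
      have hp : u ∈ periodicPts f :=
        minimalPeriod_pos_iff_mem_periodicPts.1 (by rw [hmp]; exact hi)
      obtain ⟨d, hd, hdu⟩ := ArrEq.rep_pos_exists hp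
      refine ⟨⟨⟨ArrEq.repOf f u, ⟨⟨ArrEq.rep_lt hf hu hp, by rw [ArrEq.rep_mp hp, hmp]⟩,
        fun j => ArrEq.rep_le_iter j⟩⟩, ⟨d, by rw [← hmp]; exact hd⟩⟩, ?_⟩
      exact Subtype.ext hdu
  have h2 := Nat.card_congr (Equiv.ofBijective _ hbij)
  rw [Nat.card_prod, show Nat.card (Fin i) = i from by simp] at h2
  exact h2.symm

lemma ArrEq.card_lt_n : Nat.card {u : ℕ // u < n} = n := by
  have e : {u : ℕ // u < n} ≃ Fin n :=
    ⟨fun u => ⟨u.1, u.2⟩, fun v => ⟨v.1, v.2⟩, fun _ => rfl, fun _ => rfl⟩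
  rw [Nat.card_congr e]
  simp

lemma ArrEq.card_addr (hf : ExtLike k n f) : Nat.card (ArrEq.AddrT k n f) = n := by
  rw [Nat.card_congr (ArrEq.eDec hf), ArrEq.card_lt_n]

theorem ArrEq.sigma_exists (hf : ExtLike k n f) (hg : ExtLike k n g)
    (hP : ∀ i, Nat.card (ArrEq.PerSub k f i) = Nat.card (ArrEq.PerSub k g i))
    (hS : ∀ i, Nat.card (ArrEq.StartSub k f i) = Nat.card (ArrEq.StartSub k g i)) :
    ∃ σ : ℕ → ℕ, Function.Bijective σ ∧ (∀ u, n ≤ u → σ u = u) ∧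
      (∀ u, u < n → σ u < n) ∧ (∀ u, u < k ↔ σ u < k) ∧
      (∀ u, σ (f u) = g (σ u)) := by
  have hR : ∀ i, 0 < i → Nat.card (ArrEq.RepSub k f i) = Nat.card (ArrEq.RepSub k g i) := by
    intro i hi
    have h1 := hP i
    rw [ArrEq.card_per hf hi, ArrEq.card_per hg hi] at h1
    exact Nat.eq_of_mul_eq_mul_right hi h1
  let e : ∀ i, 0 < i → (ArrEq.RepSub k f i ≃ ArrEq.RepSub k g i) :=
    fun i hi => Classical.choice (ArrEq.equiv_of_card (hR i hi))
  let eSf : ∀ i, ArrEq.StartSub k f i ≃ ArrEq.StartSub k g i :=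
    fun i => Classical.choice (ArrEq.equiv_of_card (hS i))
  have hIcard : Nat.card (ArrEq.IsoSub k n f) = Nat.card (ArrEq.IsoSub k n g) := by
    have h1 : Nat.card (ArrEq.AddrT k n f) = Nat.card (ArrEq.AddrT k n g) := by
      rw [ArrEq.card_addr hf, ArrEq.card_addr hg]
    have hC : Nat.card (Σ i : Fin (k+1), ArrEq.RepSub k f i.1 × Fin i.1)
        = Nat.card (Σ i : Fin (k+1), ArrEq.RepSub k g i.1 × Fin i.1) :=
      Nat.card_congr (Equiv.sigmaCongrRight fun i => ArrEq.ecyc e i.1)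
    have hPc : Nat.card (Σ i : Fin (k+1), ArrEq.StartSub k f i.1 × Fin (i.1+1))
        = Nat.card (Σ i : Fin (k+1), ArrEq.StartSub k g i.1 × Fin (i.1+1)) :=
      Nat.card_congr (Equiv.sigmaCongrRight fun i => (eSf i.1).prodCongr (Equiv.refl _))
    have h2 : ∀ (h : ℕ → ℕ), Nat.card (ArrEq.AddrT k n h) =
        Nat.card ((Σ i : Fin (k+1), ArrEq.RepSub k h i.1 × Fin i.1) ⊕
          (Σ i : Fin (k+1), ArrEq.StartSub k h i.1 × Fin (i.1+1)))
          + Nat.card (ArrEq.IsoSub k n h) := by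
      intro h
      rw [show ArrEq.AddrT k n h = (((Σ i : Fin (k+1), ArrEq.RepSub k h i.1 × Fin i.1) ⊕
        (Σ i : Fin (k+1), ArrEq.StartSub k h i.1 × Fin (i.1+1))) ⊕ ArrEq.IsoSub k n h) from rfl,
        Nat.card_sum]
    rw [h2 f, h2 g, Nat.card_sum, Nat.card_sum, hC, hPc] at h1
    omega
  let eIe : ArrEq.IsoSub k n f ≃ ArrEq.IsoSub k n g :=
    Classical.choice (ArrEq.equiv_of_card hIcard)
  exact ⟨ArrEq.sigmaF e eSf eIe hf hg, ArrEq.sigmaF_bij e eSf eIe hf hg,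
    fun u hu => ArrEq.sigmaF_fix e eSf eIe hf hg hu,
    fun u hu => ArrEq.sigmaF_lt e eSf eIe hf hg hu,
    ArrEq.sigmaF_ltk e eSf eIe hf hg,
    ArrEq.sigmaF_semiconj e eSf eIe hf hg⟩
end

section
variable {k n : ℕ} {f g : ℕ → ℕ}
open Function

lemma ArrEq.mp_congr {f g : ℕ → ℕ} {x y : ℕ}
    (h : ∀ m, Function.IsPeriodicPt f m x ↔ Function.IsPeriodicPt g m y) :
    Function.minimalPeriod f x = Function.minimalPeriod g y := by
  by_cases hx : x ∈ periodicPts f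
  · have hy : y ∈ periodicPts g := by
      obtain ⟨m, hm, hmx⟩ := hx
      exact ⟨m, hm, (h m).1 hmx⟩
    apply le_antisymm
    · exact IsPeriodicPt.minimalPeriod_le (minimalPeriod_pos_of_mem_periodicPts hy)
        ((h _).2 (isPeriodicPt_minimalPeriod g y))
    · exact IsPeriodicPt.minimalPeriod_le (minimalPeriod_pos_of_mem_periodicPts hx)
        ((h _).1 (isPeriodicPt_minimalPeriod f x))
  · have hy : y ∉ periodicPts g := by
      intro hy
      obtain ⟨m, hm, hmy⟩ := hy
      exact hx ⟨m, hm, (h m).2 hmy⟩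
    rw [minimalPeriod_eq_zero_of_notMem_periodicPts hx,
      minimalPeriod_eq_zero_of_notMem_periodicPts hy]

lemma ArrEq.counts_transfer {σ : ℕ → ℕ} (hbij : Function.Bijective σ)
    (hk : ∀ u, u < k ↔ σ u < k) (hsc : ∀ u, σ (f u) = g (σ u)) :
    (∀ i, Nat.card (ArrEq.PerSub k f i) = Nat.card (ArrEq.PerSub k g i)) ∧
    (∀ i, Nat.card (ArrEq.StartSub k f i) = Nat.card (ArrEq.StartSub k g i)) := by
  have hscj : Function.Semiconj σ f g := hsc
  have hit : ∀ m u, σ (f^[m] u) = g^[m] (σ u) := fun m u => (hscj.iterate_right m) u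
  have hmp : ∀ u, Function.minimalPeriod f u = Function.minimalPeriod g (σ u) := by
    intro u
    apply ArrEq.mp_congr
    intro m
    constructor
    · intro hp
      show g^[m] (σ u) = σ u
      rw [← hit m u]
      exact congrArg σ hp
    · intro hp
      have h2 : σ (f^[m] u) = σ u := by rw [hit m u]; exact hp
      exact hbij.1 h2
  have hge : ∀ v, (k ≤ v ↔ k ≤ σ v) := by
    intro v
    have := hk v
    constructor <;> intro h1 <;> by_contra h2 <;> push_neg at h2 <;> omega
  let E : ℕ ≃ ℕ := Equiv.ofBijective σ hbij
  constructor
  · intro i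
    apply Nat.card_congr
    refine Equiv.subtypeEquiv E ?_
    intro u
    exact and_congr (hk u) (by rw [hmp u]; exact Iff.rfl)
  · intro i
    apply Nat.card_congr
    refine Equiv.subtypeEquiv E ?_
    intro u
    refine and_congr (hk u) (and_congr ?_ ?_)
    · constructor
      · intro hno w hw hcon
        obtain ⟨w', rfl⟩ := hbij.2 w
        have hw' : w' < k := (hk w').2 hw
        exact hno w' hw' (hbij.1 (by rw [hsc w']; exact hcon))
      · intro hno w hw hcon
        exact hno (σ w) ((hk w).1 hw) (by rw [← hsc w]; exact congrArg σ hcon)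
    · have hset : {ℓ : ℕ | k ≤ f^[ℓ] u} = {ℓ : ℕ | k ≤ g^[ℓ] (σ u)} := by
        ext ℓ
        simp only [Set.mem_setOf_eq]
        rw [← hit ℓ u]
        exact hge _
      rw [hset]
      exact Iff.rfl
end

section
open Function

lemma ArrEq.adj_conj {n k : ℕ} (a : Fin n ≃ Fin n) (t : Fin k ≃ Fin k)
    (x y : Fin k → Fin n) (h : ∃! i, x i ≠ y i) :
    ∃! i, a (x (t.symm i)) ≠ a (y (t.symm i)) := by
  obtain ⟨i, hi, hu⟩ := h
  refine ⟨t i, ?_, ?_⟩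
  · show a (x (t.symm (t i))) ≠ a (y (t.symm (t i)))
    rw [Equiv.symm_apply_apply]
    exact fun hc => hi (a.injective hc)
  · intro j hj
    have h2 : x (t.symm j) ≠ y (t.symm j) := fun hc => hj (congrArg a hc)
    have h3 := hu _ h2
    rw [← h3]
    simp

lemma ArrEq.adj_conj_iff {n k : ℕ} (a : Fin n ≃ Fin n) (t : Fin k ≃ Fin k)
    (x y : Fin k → Fin n) :
    (∃! i, x i ≠ y i) ↔ (∃! i, a (x (t.symm i)) ≠ a (y (t.symm i))) := by
  constructor
  · exact ArrEq.adj_conj a t x y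
  · intro h
    have h2 := ArrEq.adj_conj a.symm t.symm _ _ h
    simp only [Equiv.symm_symm, Equiv.symm_apply_apply] at h2
    exact h2


end

end ArrEq

section
open ArrEq Function

theorem cycleTypePartition_equitable (n k : ℕ) (hkn : k ≤ n) :
    ∀ X ∈ {C : Set {π : Fin k → Fin n // Function.Injective π} |
        ∃ π : {π : Fin k → Fin n // Function.Injective π}, C = {ρ | SameCycleType π.1 ρ.1}},
      ∀ Y ∈ {C : Set {π : Fin k → Fin n // Function.Injective π} |
        ∃ π : {π : Fin k → Fin n // Function.Injective π}, C = {ρ | SameCycleType π.1 ρ.1}},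
      ∀ π₁ ∈ X, ∀ π₂ ∈ X,
        Nat.card {τ // (arrangementGraph n k).Adj π₁ τ ∧ τ ∈ Y} =
          Nat.card {τ // (arrangementGraph n k).Adj π₂ τ ∧ τ ∈ Y} := by
  rintro X ⟨π₀, rfl⟩ Y ⟨πY, rfl⟩ π₁ h1 π₂ h2
  have h1' : SameCycleType π₀.1 π₁.1 := h1
  have h2' : SameCycleType π₀.1 π₂.1 := h2
  have h12 : SameCycleType π₁.1 π₂.1 := by
    intro i
    exact ⟨(h1' i).1.symm.trans (h2' i).1, (h1' i).2.symm.trans (h2' i).2⟩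
  have hf : ArrEq.ExtLike k n (extFun π₁.1) := ArrEq.extLike_extFun π₁.2 hkn
  have hg : ArrEq.ExtLike k n (extFun π₂.1) := ArrEq.extLike_extFun π₂.2 hkn
  obtain ⟨σ, hbij, hfix, hltn, hltk, hsc⟩ := ArrEq.sigma_exists hf hg
    (fun i => (h12 i).1) (fun i => (h12 i).2)
  -- the permutation of Fin n and of Fin k induced by σ
  have hσb_bij : Function.Bijective (fun v : Fin n => (⟨σ v.1, hltn v.1 v.2⟩ : Fin n)) := by
    constructor
    · intro a b hab
      exact Fin.ext (hbij.1 (congrArg Fin.val hab))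
    · intro v
      obtain ⟨u, hu⟩ := hbij.2 v.1
      have hun : u < n := by
        by_contra hc
        push_neg at hc
        rw [hfix u hc] at hu
        have := v.2
        omega
      exact ⟨⟨u, hun⟩, Fin.ext hu⟩
  have hτb_bij : Function.Bijective (fun v : Fin k => (⟨σ v.1, (hltk v.1).1 v.2⟩ : Fin k)) := by
    constructor
    · intro a b hab
      exact Fin.ext (hbij.1 (congrArg Fin.val hab))
    · intro v
      obtain ⟨u, hu⟩ := hbij.2 v.1
      have huk : u < k := by
        apply (hltk u).2
        rw [hu]
        exact v.2
      exact ⟨⟨u, huk⟩, Fin.ext hu⟩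
  let σE : Fin n ≃ Fin n := Equiv.ofBijective _ hσb_bij
  let τE : Fin k ≃ Fin k := Equiv.ofBijective _ hτb_bij
  have hσE_val : ∀ v : Fin n, (σE v).1 = σ v.1 := fun v => rfl
  have hτE_val : ∀ v : Fin k, (τE v).1 = σ v.1 := fun v => rfl
  -- the graph automorphism
  have hΦinj : ∀ ρ : {π : Fin k → Fin n // Function.Injective π},
      Function.Injective (fun i => σE (ρ.1 (τE.symm i))) := by
    intro ρ a b hab
    have h3 := τE.symm.injective (ρ.2 (σE.injective hab))
    exact h3
  have hΦinv : ∀ ρ : {π : Fin k → Fin n // Function.Injective π},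
      Function.Injective (fun i => σE.symm (ρ.1 (τE i))) := by
    intro ρ a b hab
    exact τE.injective (ρ.2 (σE.symm.injective hab))
  let Φ : {π : Fin k → Fin n // Function.Injective π} ≃
      {π : Fin k → Fin n // Function.Injective π} :=
    { toFun := fun ρ => ⟨fun i => σE (ρ.1 (τE.symm i)), hΦinj ρ⟩
      invFun := fun ρ => ⟨fun i => σE.symm (ρ.1 (τE i)), hΦinv ρ⟩
      left_inv := by
        intro ρ
        apply Subtype.ext
        funext i
        simp
      right_inv := by
        intro ρ
        apply Subtype.ext
        funext i
        simp }
  -- σ semiconjugates extFun ρ to extFun (Φ ρ) for every vertex ρ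
  have hvert : ∀ ρ : {π : Fin k → Fin n // Function.Injective π}, ∀ u,
      σ (extFun ρ.1 u) = extFun (Φ ρ).1 (σ u) := by
    intro ρ u
    rcases Nat.lt_or_ge u k with hu | hu
    · have hσu : σ u < k := (hltk u).1 hu
      have h3 : extFun (Φ ρ).1 (σ u) = ((Φ ρ).1 ⟨σ u, hσu⟩).1 := dif_pos hσu
      have h4 : τE.symm ⟨σ u, hσu⟩ = ⟨u, hu⟩ := by
        have h5 : τE ⟨u, hu⟩ = ⟨σ u, hσu⟩ := Fin.ext rfl
        rw [← h5, Equiv.symm_apply_apply]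
      have h6 : ((Φ ρ).1 ⟨σ u, hσu⟩).1 = (σE (ρ.1 (τE.symm ⟨σ u, hσu⟩))).1 := rfl
      rw [h3, h6, h4, hσE_val]
      have h7 : extFun ρ.1 u = (ρ.1 ⟨u, hu⟩).1 := dif_pos hu
      rw [h7]
    · have h3 : extFun ρ.1 u = u := dif_neg (by omega)
      rcases Nat.lt_or_ge u n with hun | hun
      · have hσk : k ≤ σ u := by
          by_contra hc
          push_neg at hc
          have := (hltk u).2 hc
          omega
        have h4 : extFun (Φ ρ).1 (σ u) = σ u := dif_neg (by omega)
        rw [h3, h4]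
      · have h5 : σ u = u := hfix u hun
        have h4 : extFun (Φ ρ).1 (σ u) = σ u := dif_neg (by rw [h5]; omega)
        rw [h3, h4]
  -- Φ preserves cycle type
  have hSCT : ∀ ρ : {π : Fin k → Fin n // Function.Injective π},
      SameCycleType ρ.1 (Φ ρ).1 := by
    intro ρ
    have := ArrEq.counts_transfer (f := extFun ρ.1) (g := extFun (Φ ρ).1)
      hbij hltk (hvert ρ)
    exact fun i => ⟨this.1 i, this.2 i⟩
  -- Φ maps π₁ to π₂
  have hΦπ : Φ π₁ = π₂ := by
    apply Subtype.ext
    funext i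
    apply Fin.ext
    obtain ⟨j, rfl⟩ : ∃ j, τE j = i := ⟨τE.symm i, Equiv.apply_symm_apply _ _⟩
    show (σE (π₁.1 (τE.symm (τE j)))).1 = (π₂.1 (τE j)).1
    rw [Equiv.symm_apply_apply, hσE_val]
    have h3 := hsc j.1
    have h4 : extFun π₁.1 j.1 = (π₁.1 j).1 := by
      rw [show extFun π₁.1 j.1 = (π₁.1 ⟨j.1, j.2⟩).1 from dif_pos j.2]
    have h5 : extFun π₂.1 (σ j.1) = (π₂.1 ⟨σ j.1, (hltk j.1).1 j.2⟩).1 :=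
      dif_pos ((hltk j.1).1 j.2)
    rw [h4, h5] at h3
    rw [h3]
    congr 1
  -- Φ preserves adjacency
  have hAdj : ∀ ρ ρ' : {π : Fin k → Fin n // Function.Injective π},
      (arrangementGraph n k).Adj ρ ρ' ↔ (arrangementGraph n k).Adj (Φ ρ) (Φ ρ') := by
    intro ρ ρ'
    exact ArrEq.adj_conj_iff σE τE ρ.1 ρ'.1
  -- Φ preserves membership in Y
  have hmem : ∀ ρ : {π : Fin k → Fin n // Function.Injective π},
      SameCycleType πY.1 ρ.1 ↔ SameCycleType πY.1 (Φ ρ).1 := by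
    intro ρ
    constructor <;> intro hm i
    · exact ⟨(hm i).1.trans (hSCT ρ i).1, (hm i).2.trans (hSCT ρ i).2⟩
    · exact ⟨(hm i).1.trans (hSCT ρ i).1.symm, (hm i).2.trans (hSCT ρ i).2.symm⟩
  apply Nat.card_congr
  refine Equiv.subtypeEquiv Φ ?_
  intro ρ
  constructor
  · rintro ⟨ha, hm⟩
    refine ⟨?_, (hmem ρ).1 hm⟩
    rw [← hΦπ]
    exact (hAdj π₁ ρ).1 ha
  · rintro ⟨ha, hm⟩
    refine ⟨?_, (hmem ρ).2 hm⟩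
    rw [← hΦπ] at ha
    exact (hAdj π₁ ρ).2 ha

end
end

section
/- Let G be a walk-regular graph and Π=(V_1,...,V_m) an equitable partition of G with |V_1|=1 and quotient matrix Q. Then every eigenvalue of G is an eigenvalue of Q. -/
attribute [local instance] Classical.propDecidable

open Matrix Polynomial Finset in
/-- Let `G` be a walk-regular graph (all diagonal entries of each power of the adjacency
matrix are equal) and `Π = (C 0, …, C m)` an equitable partition of `G` with `|C 0| = 1`
and quotient matrix `Q`. Then every eigenvalue of `G` is an eigenvalue of `Q`. -/
theorem walkRegular_spectrum_subset_quotient {V : Type*} [Fintype V]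
    (G : SimpleGraph V)
    (hwr : ∀ (r : ℕ) (v w : V), (G.adjMatrix ℕ ^ r) v v = (G.adjMatrix ℕ ^ r) w w)
    (m : ℕ) (C : Fin (m + 1) → Finset V) (Q : Matrix (Fin (m + 1)) (Fin (m + 1)) ℕ)
    (hpart : ∀ v, ∃! i, v ∈ C i) (hne : ∀ i, (C i).Nonempty) (h1 : (C 0).card = 1)
    (heq : ∀ i j, ∀ v ∈ C i, ((C j).filter (G.Adj v)).card = Q i j) :
    ∀ μ : ℝ, μ ∈ spectrum ℝ (G.adjMatrix ℝ) →
      μ ∈ spectrum ℝ (Q.map (Nat.cast : ℕ → ℝ)) := by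
  classical
  intro μ hμ
  obtain ⟨v0, hv0⟩ := Finset.card_eq_one.mp h1
  have hv0mem : v0 ∈ C 0 := by rw [hv0]; exact Finset.mem_singleton_self v0
  set A : Matrix V V ℝ := G.adjMatrix ℝ with hA
  set Qr : Matrix (Fin (m + 1)) (Fin (m + 1)) ℝ := Q.map (Nat.cast : ℕ → ℝ) with hQr
  set S : Matrix V (Fin (m + 1)) ℝ := Matrix.of fun v i => if v ∈ C i then 1 else 0 with hS
  -- A * S = S * Qr
  have hAS : A * S = S * Qr := by
    ext v j
    obtain ⟨i, hi, hiu⟩ := hpart v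
    have lhs : (A * S) v j = ((C j).filter (G.Adj v)).card := by
      rw [Matrix.mul_apply]
      rw [show ∑ w, A v w * S w j
          = ∑ w, (if w ∈ (C j).filter (G.Adj v) then (1 : ℝ) else 0) from
        Finset.sum_congr rfl fun w _ => by
          by_cases h1 : G.Adj v w <;> by_cases h2 : w ∈ C j <;>
            simp [hA, hS, h1, h2, Finset.mem_filter]]
      rw [Finset.sum_ite_mem, Finset.univ_inter, Finset.sum_const, nsmul_eq_mul, mul_one]
    have rhs : (S * Qr) v j = (Q i j : ℝ) := by
      rw [Matrix.mul_apply]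
      rw [Finset.sum_eq_single i]
      · simp [hS, hQr, hi, Matrix.map_apply]
      · intro k _ hk
        have : v ∉ C k := fun hvk => hk (hiu k hvk)
        simp [hS, this]
      · simp
    rw [lhs, rhs, heq i j v hi]
  have hpowS : ∀ r : ℕ, A ^ r * S = S * Qr ^ r := by
    intro r
    induction r with
    | zero => simp
    | succ n ih =>
      rw [pow_succ, pow_succ, Matrix.mul_assoc, hAS, ← Matrix.mul_assoc, ih,
        Matrix.mul_assoc]
  -- diagonal identity A^r v0 v0 = Qr^r 0 0
  have hdiag : ∀ r : ℕ, (A ^ r) v0 v0 = (Qr ^ r) 0 0 := by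
    intro r
    have h := congrFun (congrFun (hpowS r) v0) 0
    have lhs : (A ^ r * S) v0 0 = (A ^ r) v0 v0 := by
      rw [Matrix.mul_apply, Finset.sum_eq_single v0]
      · simp [hS, hv0mem]
      · intro w _ hw
        have : w ∉ C 0 := by rw [hv0]; simp [hw]
        simp [hS, this]
      · simp
    have rhs : (S * Qr ^ r) v0 0 = (Qr ^ r) 0 0 := by
      rw [Matrix.mul_apply, Finset.sum_eq_single 0]
      · simp [hS, hv0mem]
      · intro k _ hk
        have : v0 ∉ C k := fun hvk =>
          hk (ExistsUnique.unique (hpart v0) hvk hv0mem)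
        simp [hS, this]
      · simp
    rw [← lhs, h, rhs]
  -- walk regularity over ℝ
  have hmap : ∀ r : ℕ, A ^ r = ((G.adjMatrix ℕ) ^ r).map (Nat.cast : ℕ → ℝ) := by
    intro r
    have h : A = (Nat.castRingHom ℝ).mapMatrix (G.adjMatrix ℕ) := by
      ext v w; simp [hA, Matrix.map_apply]
    rw [h, ← map_pow]; rfl
  have hwrR : ∀ (r : ℕ) (w : V), (A ^ r) w w = (A ^ r) v0 v0 := by
    intro r w
    rw [hmap r]
    simp only [Matrix.map_apply]
    exact_mod_cast congrArg (Nat.cast : ℕ → ℝ) (hwr r w v0)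
  -- entries of polynomials of A
  have haeval_entry : ∀ (f : ℝ[X]) (v w : V),
      (aeval A f) v w = ∑ i ∈ Finset.range (f.natDegree + 1), f.coeff i * (A ^ i) v w := by
    intro f v w
    rw [Polynomial.aeval_eq_sum_range]
    rw [show ((∑ i ∈ Finset.range (f.natDegree + 1), f.coeff i • A ^ i) v w)
        = ∑ i ∈ Finset.range (f.natDegree + 1), (f.coeff i • A ^ i) v w from
      Matrix.sum_apply v w _ _]
    exact Finset.sum_congr rfl fun i _ => by simp [Matrix.smul_apply]
  have haevalQ_entry : ∀ (f : ℝ[X]),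
      (aeval Qr f) 0 0 = ∑ i ∈ Finset.range (f.natDegree + 1), f.coeff i * (Qr ^ i) 0 0 := by
    intro f
    rw [Polynomial.aeval_eq_sum_range]
    rw [show ((∑ i ∈ Finset.range (f.natDegree + 1), f.coeff i • Qr ^ i) 0 0)
        = ∑ i ∈ Finset.range (f.natDegree + 1), (f.coeff i • Qr ^ i) 0 0 from
      Matrix.sum_apply 0 0 _ _]
    exact Finset.sum_congr rfl fun i _ => by simp [Matrix.smul_apply]
  have hfdiag : ∀ f : ℝ[X], (aeval A f) v0 v0 = (aeval Qr f) 0 0 := by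
    intro f
    rw [haeval_entry f v0 v0, haevalQ_entry f]
    exact Finset.sum_congr rfl fun i _ => by rw [hdiag i]
  have hfw : ∀ (f : ℝ[X]) (w : V), (aeval A f) w w = (aeval A f) v0 v0 := by
    intro f w
    rw [haeval_entry f w w, haeval_entry f v0 v0]
    exact Finset.sum_congr rfl fun i _ => by rw [hwrR i w]
  -- B := p(A) with p the charpoly of Qr
  set p : ℝ[X] := Qr.charpoly with hp
  set B : Matrix V V ℝ := aeval A p with hB
  have hQp : aeval Qr p = 0 := Qr.aeval_self_charpoly
  -- B symmetric
  have hBsymm : ∀ v w : V, B v w = B w v := by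
    intro v w
    rw [hB, haeval_entry p v w, haeval_entry p w v]
    refine Finset.sum_congr rfl fun i _ => ?_
    have : (A ^ i)ᵀ = A ^ i := by
      rw [Matrix.transpose_pow, hA, SimpleGraph.transpose_adjMatrix]
    have h2 : (A ^ i) w v = (A ^ i) v w := by
      conv_lhs => rw [← this]
      rfl
    rw [h2]
  -- diagonal of B*B is zero
  have hBBdiag : ∀ w : V, (B * B) w w = 0 := by
    intro w
    have : B * B = aeval A (p * p) := by rw [hB, _root_.map_mul]
    rw [this, hfw (p * p) w, hfdiag (p * p), _root_.map_mul, hQp]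
    simp
  -- hence B = 0
  have hB0 : B = 0 := by
    ext v w
    have h := hBBdiag v
    rw [Matrix.mul_apply] at h
    have hsq : ∀ u : V, B v u * B u v = (B v u) ^ 2 := fun u => by
      rw [hBsymm u v]; ring
    rw [Finset.sum_congr rfl fun u _ => hsq u] at h
    have := (Finset.sum_eq_zero_iff_of_nonneg
      (fun u _ => sq_nonneg (B v u))).mp h w (Finset.mem_univ w)
    have hzero : B v w = 0 := by
      have := pow_eq_zero_iff (n := 2) (by norm_num) |>.mp this
      exact this
    simpa using hzero
  -- eigenvector of A for μ
  have hdet : (μ • (1 : Matrix V V ℝ) - A).det = 0 := by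
    by_contra hne0
    exact (spectrum.mem_iff.mp hμ) (by
      rw [Algebra.algebraMap_eq_smul_one]
      exact (Matrix.isUnit_iff_isUnit_det _).mpr (isUnit_iff_ne_zero.mpr hne0))
  obtain ⟨x, hx0, hx⟩ := (Matrix.exists_mulVec_eq_zero_iff).mpr hdet
  have hAx : A.mulVec x = μ • x := by
    have h := hx
    rw [Matrix.sub_mulVec, sub_eq_zero] at h
    rw [← h, Matrix.smul_mulVec, Matrix.one_mulVec]
  have hpowx : ∀ r : ℕ, (A ^ r).mulVec x = (μ ^ r) • x := by
    intro r
    induction r with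
    | zero => simp [Matrix.one_mulVec]
    | succ n ih =>
      rw [pow_succ, pow_succ, ← Matrix.mulVec_mulVec, hAx, Matrix.mulVec_smul, ih,
        smul_smul, mul_comm]
  have hBx : B.mulVec x = (p.eval μ) • x := by
    funext w
    rw [Matrix.mulVec, dotProduct]
    rw [show ∑ u, B w u * x u
        = ∑ u, (∑ i ∈ Finset.range (p.natDegree + 1), p.coeff i * (A ^ i) w u) * x u from
      Finset.sum_congr rfl fun u _ => by rw [hB, haeval_entry p w u]]
    rw [show ∑ u, (∑ i ∈ Finset.range (p.natDegree + 1), p.coeff i * (A ^ i) w u) * x u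
        = ∑ i ∈ Finset.range (p.natDegree + 1), p.coeff i * ∑ u, (A ^ i) w u * x u by
      simp_rw [Finset.sum_mul]
      rw [Finset.sum_comm]
      exact Finset.sum_congr rfl fun i _ => by
        rw [Finset.mul_sum]
        exact Finset.sum_congr rfl fun u _ => by ring]
    have : ∀ i, ∑ u, (A ^ i) w u * x u = μ ^ i * x w := by
      intro i
      have := congrFun (hpowx i) w
      simpa [Matrix.mulVec, dotProduct] using this
    rw [Finset.sum_congr rfl fun i _ => by rw [this i]]
    rw [Polynomial.eval_eq_sum_range]
    simp [Finset.sum_mul, mul_assoc]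
  have hpμ : p.eval μ = 0 := by
    rw [hB0] at hBx
    obtain ⟨w, hw⟩ := Function.ne_iff.mp hx0
    have := congrFun hBx.symm w
    simp only [Matrix.zero_mulVec, Pi.zero_apply, Pi.smul_apply, smul_eq_mul] at this
    rcases mul_eq_zero.mp this with h | h
    · exact h
    · exact absurd h hw
  -- conclude
  rw [spectrum.mem_iff]
  intro hUnit
  have hdetQ : (μ • (1 : Matrix (Fin (m + 1)) (Fin (m + 1)) ℝ) - Qr).det = p.eval μ := by
    rw [hp, Matrix.charpoly]
    rw [_root_.eval_det, matPolyEquiv_charmatrix]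
    simp only [Polynomial.eval_sub, Polynomial.eval_X, Polynomial.eval_C]
    congr 2
    rw [Matrix.scalar_apply]
    ext i j
    by_cases h : i = j <;> simp [Matrix.diagonal_apply, Matrix.one_apply, h]
  rw [Algebra.algebraMap_eq_smul_one] at hUnit
  have := (Matrix.isUnit_iff_isUnit_det _).mp hUnit
  rw [hdetQ, hpμ] at this
  exact (by simpa using this : False)
end

section
/- Let G be a walk-regular graph with ν vertices, Π=(V_1,...,V_m) an equitable partition with |V_1|=1 and quotient matrix Q. Let S=diag(√|V_1|,...,√|V_m|) and P=SQS^{-1}. If {x_1,...,x_ℓ} is an orthonormal basis of the eigenspace of P for an eigenvalue λ, then the multiplicity of λ as an eigenvalue of G equals ν·∑_{i=1}^ℓ ((x_i)_1)², where (x_i)_1 is the first coordinate of x_i. -/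
attribute [local instance] Classical.propDecidable

open Matrix Polynomial in
lemma conj_diag_pow {n : Type*} [Fintype n] [DecidableEq n]
    (W : Matrix n n ℝ) (hW : W * star W = 1) (hW' : star W * W = 1)
    (g : n → ℝ) (r : ℕ) :
    (W * Matrix.diagonal g * star W) ^ r = W * Matrix.diagonal (fun i => g i ^ r) * star W := by
  induction r with
  | zero => simp [hW]
  | succ r ih =>
      rw [pow_succ, ih, show W * diagonal (fun i => g i ^ r) * star W * (W * diagonal g * star W)
            = W * diagonal (fun i => g i ^ r) * (star W * W) * (diagonal g * star W) by
          simp only [mul_assoc], hW', mul_one]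
      rw [show W * diagonal (fun i => g i ^ r) * (diagonal g * star W)
          = W * (diagonal (fun i => g i ^ r) * diagonal g) * star W by simp only [mul_assoc],
        diagonal_mul_diagonal]
      congr 2

open Matrix Polynomial in
lemma conj_diag_aeval {n : Type*} [Fintype n] [DecidableEq n]
    (W : Matrix n n ℝ) (hW : W * star W = 1) (hW' : star W * W = 1)
    (g : n → ℝ) (p : Polynomial ℝ) :
    Polynomial.aeval (W * Matrix.diagonal g * star W) p
      = W * Matrix.diagonal (fun i => p.eval (g i)) * star W := by
  rw [Polynomial.aeval_eq_sum_range]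
  have hdiag : Matrix.diagonal (fun i => p.eval (g i))
      = ∑ r ∈ Finset.range (p.natDegree + 1), p.coeff r • Matrix.diagonal (fun i => g i ^ r) := by
    ext a b
    rw [Matrix.sum_apply]
    by_cases h : a = b
    · subst h
      simp only [Matrix.diagonal_apply_eq, Matrix.smul_apply, smul_eq_mul]
      exact Polynomial.eval_eq_sum_range (g a)
    · simp [Matrix.diagonal_apply_ne _ h]
  rw [hdiag, Finset.mul_sum, Finset.sum_mul]
  refine Finset.sum_congr rfl fun r _ => ?_
  rw [conj_diag_pow W hW hW' g r, Matrix.mul_smul, Matrix.smul_mul]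

open Matrix Polynomial in
/-- Godsil–McKay multiplicity formula. Let `G` be a walk-regular graph with `ν` vertices,
`Π = (C 0, …, C m)` an equitable partition with `|C 0| = 1` and quotient matrix `Q`.
Let `S = diag(√|C 0|, …, √|C m|)` and `P = S Q S⁻¹`. If `x 0, …, x (ℓ-1)` is an
orthonormal basis of the eigenspace of `P` for the eigenvalue `μ`, then the multiplicity
of `μ` as an eigenvalue of `G` equals `ν ⬝ ∑ᵢ ((x i)₁)²`. -/
theorem walkRegular_eigenvalue_multiplicity {V : Type*} [Fintype V]
    (G : SimpleGraph V)
    (hwr : ∀ (r : ℕ) (v w : V), (G.adjMatrix ℕ ^ r) v v = (G.adjMatrix ℕ ^ r) w w)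
    (m : ℕ) (C : Fin (m + 1) → Finset V) (Q : Matrix (Fin (m + 1)) (Fin (m + 1)) ℕ)
    (hpart : ∀ v, ∃! i, v ∈ C i) (hne : ∀ i, (C i).Nonempty) (h1 : (C 0).card = 1)
    (heq : ∀ i j, ∀ v ∈ C i, ((C j).filter (G.Adj v)).card = Q i j)
    (S P : Matrix (Fin (m + 1)) (Fin (m + 1)) ℝ)
    (hS : S = Matrix.diagonal fun i => Real.sqrt ((C i).card))
    (hP : P = S * Q.map (Nat.cast : ℕ → ℝ) * S⁻¹)
    (μ : ℝ) (ℓ : ℕ) (x : Fin ℓ → Fin (m + 1) → ℝ)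
    (heig : ∀ i, P.mulVec (x i) = μ • x i)
    (horth : ∀ i j, (∑ t, x i t * x j t) = if i = j then (1 : ℝ) else 0)
    (hspan : ∀ y : Fin (m + 1) → ℝ, P.mulVec y = μ • y →
      y ∈ Submodule.span ℝ (Set.range x)) :
    (Module.finrank ℝ
        (Module.End.eigenspace (Matrix.toLin' (G.adjMatrix ℝ)) μ) : ℝ) =
      (Fintype.card V) * ∑ i, (x i 0) ^ 2 := by
  classical
  set A : Matrix V V ℝ := G.adjMatrix ℝ with hAdef
  -- basic facts about the partition
  have hcpos : ∀ i, (0 : ℝ) < ((C i).card : ℝ) := fun i => by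
    exact_mod_cast Finset.card_pos.mpr (hne i)
  have hsqpos : ∀ i, (0 : ℝ) < Real.sqrt ((C i).card) := fun i => Real.sqrt_pos.mpr (hcpos i)
  have hsqne : ∀ i, Real.sqrt (((C i).card : ℝ)) ≠ 0 := fun i => (hsqpos i).ne'
  have hsqsq : ∀ i, Real.sqrt ((C i).card) * Real.sqrt ((C i).card) = ((C i).card : ℝ) :=
    fun i => Real.mul_self_sqrt (hcpos i).le
  obtain ⟨v0, hv0⟩ := Finset.card_eq_one.mp h1
  have hv0mem : v0 ∈ C 0 := by rw [hv0]; exact Finset.mem_singleton_self v0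
  have hclass : ∀ v : V, ∃ i, v ∈ C i ∧ ∀ j, v ∈ C j → j = i := fun v => hpart v
  set idx : V → Fin (m + 1) := fun v => (hclass v).choose with hidxdef
  have hmem : ∀ v, v ∈ C (idx v) := fun v => (hclass v).choose_spec.1
  have huniq : ∀ v i, v ∈ C i → i = idx v := fun v i h => (hclass v).choose_spec.2 i h
  -- the normalized characteristic matrix
  set B : Matrix V (Fin (m + 1)) ℝ :=
    Matrix.of fun v i => (if v ∈ C i then (1 : ℝ) else 0) * (Real.sqrt ((C i).card))⁻¹
    with hBdef
  have hBapp : ∀ v i, B v i = (if v ∈ C i then (1 : ℝ) else 0) * (Real.sqrt ((C i).card))⁻¹ :=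
    fun v i => rfl
  have hchi : ∀ i j, (∑ v, (if v ∈ C i then (1 : ℝ) else 0) * (if v ∈ C j then 1 else 0))
      = if i = j then ((C i).card : ℝ) else 0 := by
    intro i j
    by_cases h : i = j
    · subst h
      rw [if_pos rfl]
      have hterm : ∀ v : V, (if v ∈ C i then (1 : ℝ) else 0) * (if v ∈ C i then 1 else 0)
          = if v ∈ C i then 1 else 0 := by
        intro v; by_cases hv : v ∈ C i <;> simp [hv]
      rw [Finset.sum_congr rfl fun v _ => hterm v, Finset.sum_boole]
      have : (Finset.univ.filter fun v => v ∈ C i) = C i := by ext w; simp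
      rw [this]
    · rw [if_neg h]
      apply Finset.sum_eq_zero
      intro v _
      by_cases hvi : v ∈ C i
      · by_cases hvj : v ∈ C j
        · exact absurd ((huniq v i hvi).trans (huniq v j hvj).symm) h
        · simp [hvj]
      · simp [hvi]
  have hBtB : Bᵀ * B = 1 := by
    ext i j
    rw [Matrix.mul_apply]
    simp only [Matrix.transpose_apply, hBapp]
    have : ∀ v : V, ((if v ∈ C i then (1 : ℝ) else 0) * (Real.sqrt ((C i).card))⁻¹)
        * ((if v ∈ C j then (1 : ℝ) else 0) * (Real.sqrt ((C j).card))⁻¹)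
        = ((Real.sqrt ((C i).card))⁻¹ * (Real.sqrt ((C j).card))⁻¹)
          * ((if v ∈ C i then (1 : ℝ) else 0) * (if v ∈ C j then 1 else 0)) := by
      intro v; ring
    rw [Finset.sum_congr rfl fun v _ => this v, ← Finset.mul_sum, hchi]
    by_cases h : i = j
    · subst h
      rw [if_pos rfl, Matrix.one_apply_eq, ← hsqsq i]
      field_simp
      rw [Real.sqrt_sq (Real.sqrt_nonneg _)]
    · rw [if_neg h, Matrix.one_apply_ne h, mul_zero]
  have hPapp : ∀ i j, P i j = Real.sqrt ((C i).card) * (Q i j : ℝ)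
      * (Real.sqrt ((C j).card))⁻¹ := by
    have hSinv : S⁻¹ = Matrix.diagonal fun i => (Real.sqrt ((C i).card))⁻¹ := by
      apply Matrix.inv_eq_right_inv
      rw [hS, Matrix.diagonal_mul_diagonal]
      have : (fun i => Real.sqrt ((C i).card) * (Real.sqrt ((C i).card))⁻¹)
          = fun _ => (1 : ℝ) := by
        funext i; exact mul_inv_cancel₀ (hsqne i)
      rw [this, Matrix.diagonal_one]
    intro i j
    rw [hP, hSinv, hS, Matrix.mul_diagonal, Matrix.diagonal_mul, Matrix.map_apply]
  have hAB : A * B = B * P := by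
    ext v j
    rw [Matrix.mul_apply, Matrix.mul_apply]
    have hL : ∑ w, A v w * B w j
        = (Q (idx v) j : ℝ) * (Real.sqrt ((C j).card))⁻¹ := by
      simp only [hAdef, SimpleGraph.adjMatrix_apply, hBapp]
      have hterm : ∀ w : V, (if G.Adj v w then (1 : ℝ) else 0)
          * ((if w ∈ C j then (1 : ℝ) else 0) * (Real.sqrt ((C j).card))⁻¹)
          = (if w ∈ (C j).filter (G.Adj v) then (1 : ℝ) else 0)
            * (Real.sqrt ((C j).card))⁻¹ := by
        intro w
        by_cases h1 : G.Adj v w <;> by_cases h2 : w ∈ C j <;>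
          simp [h1, h2, Finset.mem_filter]
      rw [Finset.sum_congr rfl fun w _ => hterm w, ← Finset.sum_mul, Finset.sum_boole]
      have : (Finset.univ.filter fun w => w ∈ (C j).filter (G.Adj v))
          = (C j).filter (G.Adj v) := by
        ext w; simp
      rw [this, heq (idx v) j v (hmem v)]
    rw [hL]
    rw [Finset.sum_eq_single (idx v)]
    · rw [hBapp, hPapp, if_pos (hmem v), one_mul]
      rw [show Real.sqrt ((C (idx v)).card) * (Q (idx v) j : ℝ)
          * (Real.sqrt ((C j).card))⁻¹
          = Real.sqrt ((C (idx v)).card)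
            * ((Q (idx v) j : ℝ) * (Real.sqrt ((C j).card))⁻¹) by ring]
      rw [inv_mul_cancel_left₀ (hsqne (idx v))]
    · intro k _ hk
      have : v ∉ C k := fun h => hk (huniq v k h)
      rw [hBapp, if_neg this, zero_mul, zero_mul]
    · intro h
      exact absurd (Finset.mem_univ _) h
  have hABr : ∀ r : ℕ, A ^ r * B = B * P ^ r := by
    intro r
    induction r with
    | zero => simp
    | succ r ih =>
        rw [pow_succ, pow_succ, Matrix.mul_assoc, hAB, ← Matrix.mul_assoc, ih,
          Matrix.mul_assoc]
  have hPt : Pᵀ = P := by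
    have hPBAB : Bᵀ * A * B = P := by
      rw [Matrix.mul_assoc, hAB, ← Matrix.mul_assoc, hBtB, one_mul]
    rw [← hPBAB, Matrix.transpose_mul, Matrix.transpose_mul, Matrix.transpose_transpose,
      show Aᵀ = A from G.transpose_adjMatrix, ← Matrix.mul_assoc]
  have hPH : P.IsHermitian := by
    rw [Matrix.IsHermitian, Matrix.conjTranspose_eq_transpose_of_trivial, hPt]
  -- the projection matrix F onto the μ-eigenspace of P
  set F : Matrix (Fin (m + 1)) (Fin (m + 1)) ℝ :=
    Matrix.of fun a b => ∑ i, x i a * x i b with hFdef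
  have hFapp : ∀ a b, F a b = ∑ i, x i a * x i b := fun a b => rfl
  have hFeig : ∀ y : Fin (m + 1) → ℝ, P *ᵥ y = μ • y → F *ᵥ y = y := by
    intro y hy
    obtain ⟨c, hc⟩ := (Submodule.mem_span_range_iff_exists_fun ℝ).mp (hspan y hy)
    have hcoef : ∀ i, (∑ b, x i b * y b) = c i := by
      intro i
      rw [← hc]
      have : ∀ b, x i b * (∑ j, c j • x j) b = ∑ j, c j * (x i b * x j b) := by
        intro b
        rw [Finset.sum_apply, Finset.mul_sum]
        refine Finset.sum_congr rfl fun j _ => ?_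
        simp [Pi.smul_apply]; ring
      rw [Finset.sum_congr rfl fun b _ => this b, Finset.sum_comm]
      have : ∀ j, (∑ b, c j * (x i b * x j b)) = c j * if i = j then 1 else 0 := by
        intro j
        rw [← Finset.mul_sum, horth i j]
      rw [Finset.sum_congr rfl fun j _ => this j]
      simp
    funext a
    show ∑ b, F a b * y b = y a
    have : ∀ b, F a b * y b = ∑ i, x i a * (x i b * y b) := by
      intro b
      rw [hFapp, Finset.sum_mul]
      refine Finset.sum_congr rfl fun i _ => ?_
      ring
    rw [Finset.sum_congr rfl fun b _ => this b, Finset.sum_comm]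
    have : ∀ i, (∑ b, x i a * (x i b * y b)) = x i a * c i := by
      intro i
      rw [← Finset.mul_sum, hcoef i]
    rw [Finset.sum_congr rfl fun i _ => this i, ← hc]
    rw [Finset.sum_apply]
    refine Finset.sum_congr rfl fun i _ => ?_
    simp [Pi.smul_apply]; ring
  have hPsymm : ∀ a b, P a b = P b a := by
    intro a b
    conv_lhs => rw [← hPt]
    rfl
  have hForth : ∀ (y : Fin (m + 1) → ℝ) (lam : ℝ), P *ᵥ y = lam • y → lam ≠ μ →
      F *ᵥ y = 0 := by
    intro y lam hy hlam
    have hd : ∀ i, (∑ t, x i t * y t) = 0 := by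
      intro i
      have key : μ * (∑ t, x i t * y t) = lam * (∑ t, x i t * y t) := by
        calc μ * (∑ t, x i t * y t) = ∑ t, (μ • x i) t * y t := by
              rw [Finset.mul_sum]
              refine Finset.sum_congr rfl fun t _ => ?_
              simp [Pi.smul_apply]; ring
          _ = ∑ t, (P *ᵥ x i) t * y t := by rw [heig i]
          _ = ∑ s, x i s * (P *ᵥ y) s := by
              simp only [Matrix.mulVec, dotProduct]
              calc ∑ t, (∑ s, P t s * x i s) * y t
                  = ∑ t, ∑ s, x i s * (P s t * y t) := by
                    refine Finset.sum_congr rfl fun t _ => ?_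
                    rw [Finset.sum_mul]
                    refine Finset.sum_congr rfl fun s _ => ?_
                    rw [hPsymm t s]; ring
                _ = ∑ s, ∑ t, x i s * (P s t * y t) := Finset.sum_comm
                _ = ∑ s, x i s * ∑ t, P s t * y t := by
                    refine Finset.sum_congr rfl fun s _ => ?_
                    rw [Finset.mul_sum]
          _ = ∑ s, x i s * (lam • y) s := by rw [hy]
          _ = lam * (∑ t, x i t * y t) := by
              rw [Finset.mul_sum]
              refine Finset.sum_congr rfl fun t _ => ?_
              simp [Pi.smul_apply]; ring
      have : (μ - lam) * (∑ t, x i t * y t) = 0 := by ring_nf; linarith [key]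
      rcases mul_eq_zero.mp this with h | h
      · exact absurd (sub_eq_zero.mp h).symm hlam
      · exact h
    funext a
    show ∑ b, F a b * y b = 0
    have : ∀ b, F a b * y b = ∑ i, x i a * (x i b * y b) := by
      intro b
      rw [hFapp, Finset.sum_mul]
      refine Finset.sum_congr rfl fun i _ => ?_
      ring
    rw [Finset.sum_congr rfl fun b _ => this b, Finset.sum_comm]
    have : ∀ i, (∑ b, x i a * (x i b * y b)) = 0 := by
      intro i
      rw [← Finset.mul_sum, hd i, mul_zero]
    rw [Finset.sum_congr rfl fun i _ => this i, Finset.sum_const_zero]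
  -- spectral decomposition of A
  have hAH : A.IsHermitian := by
    rw [Matrix.IsHermitian, Matrix.conjTranspose_eq_transpose_of_trivial]
    exact G.transpose_adjMatrix
  set U : Matrix V V ℝ := (Matrix.IsHermitian.eigenvectorUnitary hAH : Matrix V V ℝ)
    with hUdef
  set ev : V → ℝ := hAH.eigenvalues with hevdef
  have hU1 : U * star U = 1 :=
    Matrix.mem_unitaryGroup_iff.mp (Matrix.IsHermitian.eigenvectorUnitary hAH).2
  have hU2 : star U * U = 1 :=
    Matrix.mem_unitaryGroup_iff'.mp (Matrix.IsHermitian.eigenvectorUnitary hAH).2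
  have hspecA : A = U * Matrix.diagonal ev * star U := by
    have := hAH.spectral_theorem
    simpa [RCLike.ofReal_real_eq_id, Function.id_comp] using this
  have hev_range : ∀ (z : V → ℝ) (lam : ℝ), z ≠ 0 → A *ᵥ z = lam • z → ∃ i, ev i = lam := by
    intro z lam hz hzeq
    set c : V → ℝ := star U *ᵥ z with hcdef
    have hcz : U *ᵥ c = z := by rw [hcdef, Matrix.mulVec_mulVec, hU1, Matrix.one_mulVec]
    have hcne : c ≠ 0 := fun h => hz (by rw [← hcz, h, Matrix.mulVec_zero])
    have hDc : Matrix.diagonal ev *ᵥ c = lam • c := by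
      have hcomm : star U * A = Matrix.diagonal ev * star U := by
        rw [hspecA, show star U * (U * Matrix.diagonal ev * star U)
            = (star U * U) * (Matrix.diagonal ev * star U) by simp only [mul_assoc], hU2,
          one_mul]
      calc Matrix.diagonal ev *ᵥ c = (Matrix.diagonal ev * star U) *ᵥ z := by
            rw [hcdef, Matrix.mulVec_mulVec]
        _ = (star U * A) *ᵥ z := by rw [hcomm]
        _ = star U *ᵥ (A *ᵥ z) := by rw [Matrix.mulVec_mulVec]
        _ = star U *ᵥ (lam • z) := by rw [hzeq]
        _ = lam • c := by rw [Matrix.mulVec_smul, hcdef]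
    obtain ⟨i, hi⟩ := Function.ne_iff.mp hcne
    refine ⟨i, ?_⟩
    have h2 : ev i * c i = lam * c i := by
      have := congrFun hDc i
      rwa [Matrix.mulVec_diagonal, Pi.smul_apply, smul_eq_mul] at this
    exact mul_right_cancel₀ hi h2
  -- the Lagrange interpolation polynomial
  set sfin : Finset ℝ := insert μ (Finset.image ev Finset.univ) with hsfindef
  set p : Polynomial ℝ := Lagrange.interpolate sfin id (fun t => if t = μ then (1 : ℝ) else 0)
    with hpdef
  have hpeval : ∀ t ∈ sfin, p.eval t = if t = μ then 1 else 0 := by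
    intro t ht
    have h := Lagrange.eval_interpolate_at_node (v := id)
      (r := fun t => if t = μ then (1 : ℝ) else 0) (Set.injOn_id _) ht
    rw [← hpdef] at h
    simpa only [id_eq] using h
  have hpμ : p.eval μ = 1 := by rw [hpeval μ (Finset.mem_insert_self _ _)]; simp
  have hpev : ∀ i : V, p.eval (ev i) = if ev i = μ then 1 else 0 := fun i =>
    hpeval _ (Finset.mem_insert_of_mem (Finset.mem_image_of_mem ev (Finset.mem_univ i)))
  -- the projection matrix E
  set dlt : V → ℝ := fun i => if ev i = μ then 1 else 0 with hdltdef
  set E : Matrix V V ℝ := U * Matrix.diagonal dlt * star U with hEdefn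
  have hEpoly : Polynomial.aeval A p = E := by
    conv_lhs => rw [hspecA]
    rw [conj_diag_aeval U hU1 hU2 ev p, hEdefn,
      show (fun i => p.eval (ev i)) = dlt from funext fun i => hpev i]
  -- constant diagonal of E
  have hcastpow : ∀ (r : ℕ) (v w : V), (A ^ r) v v = (A ^ r) w w := by
    have hmap : A = (Nat.castRingHom ℝ).mapMatrix (G.adjMatrix ℕ) := by
      ext v w
      simp [hAdef, RingHom.mapMatrix_apply, Matrix.map_apply, SimpleGraph.adjMatrix_apply,
        apply_ite (Nat.cast : ℕ → ℝ)]
    intro r v w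
    rw [hmap, ← map_pow]
    simp only [RingHom.mapMatrix_apply, Matrix.map_apply]
    exact congrArg _ (hwr r v w)
  have hEdiagconst : ∀ v w : V, E v v = E w w := by
    intro v w
    have hsum : ∀ u : V, E u u
        = ∑ r ∈ Finset.range (p.natDegree + 1), p.coeff r * (A ^ r) u u := by
      intro u
      rw [← hEpoly, Polynomial.aeval_eq_sum_range, Matrix.sum_apply]
      exact Finset.sum_congr rfl fun r _ => by rw [Matrix.smul_apply, smul_eq_mul]
    rw [hsum v, hsum w]
    exact Finset.sum_congr rfl fun r _ => by rw [hcastpow r v w]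
  have htrE : Matrix.trace E = (Fintype.card V : ℝ) * E v0 v0 := by
    rw [Matrix.trace]
    have hdg : ∀ v : V, Matrix.diag E v = E v0 v0 := fun v => hEdiagconst v v0
    rw [Finset.sum_congr rfl fun v _ => hdg v, Finset.sum_const, Finset.card_univ,
      nsmul_eq_mul]
  -- E is the projection onto the eigenspace
  have hAE : A * E = μ • E := by
    rw [hEdefn]
    conv_lhs => rw [hspecA]
    rw [show U * Matrix.diagonal ev * star U * (U * Matrix.diagonal dlt * star U)
        = U * Matrix.diagonal ev * (star U * U) * (Matrix.diagonal dlt * star U) by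
        simp only [mul_assoc], hU2, mul_one,
      show U * Matrix.diagonal ev * (Matrix.diagonal dlt * star U)
        = U * (Matrix.diagonal ev * Matrix.diagonal dlt) * star U by simp only [mul_assoc],
      Matrix.diagonal_mul_diagonal]
    have hd : (fun i => ev i * dlt i) = μ • dlt := by
      funext i
      by_cases h : ev i = μ <;> simp [hdltdef, h]
    rw [hd, Matrix.diagonal_smul, Matrix.mul_smul, Matrix.smul_mul]
  have hprojmem : ∀ y : V → ℝ, A *ᵥ (E *ᵥ y) = μ • (E *ᵥ y) := by
    intro y
    rw [Matrix.mulVec_mulVec, hAE, Matrix.smul_mulVec]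
  have hprojfix : ∀ y : V → ℝ, A *ᵥ y = μ • y → E *ᵥ y = y := by
    intro y hy
    have hpow : ∀ r : ℕ, (A ^ r) *ᵥ y = (μ ^ r) • y := by
      intro r
      induction r with
      | zero => simp
      | succ r ih =>
          rw [pow_succ, ← Matrix.mulVec_mulVec, hy, Matrix.mulVec_smul, ih, smul_smul,
            pow_succ]
          ring_nf
    rw [← hEpoly, Polynomial.aeval_eq_sum_range]
    have hsmv : (∑ r ∈ Finset.range (p.natDegree + 1), p.coeff r • A ^ r) *ᵥ y
        = ∑ r ∈ Finset.range (p.natDegree + 1), p.coeff r • ((A ^ r) *ᵥ y) := by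
      exact (map_sum (Matrix.mulVec.addMonoidHomLeft y) _ _).trans
        (Finset.sum_congr rfl fun r _ => Matrix.smul_mulVec _ _ _)
    rw [hsmv]
    have : ∀ r, p.coeff r • ((A ^ r) *ᵥ y) = (p.coeff r * μ ^ r) • y := by
      intro r
      rw [hpow r, smul_smul]
    rw [Finset.sum_congr rfl fun r _ => this r, ← Finset.sum_smul,
      ← Polynomial.eval_eq_sum_range, hpμ, one_smul]
  have hfin : (Module.finrank ℝ (Module.End.eigenspace (Matrix.toLin' A) μ) : ℝ)
      = Matrix.trace E := by
    have hproj : LinearMap.IsProj (Module.End.eigenspace (Matrix.toLin' A) μ)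
        (Matrix.toLin' E) := by
      constructor
      · intro y
        rw [Module.End.mem_eigenspace_iff]
        simp only [Matrix.toLin'_apply]
        exact hprojmem y
      · intro y hy
        rw [Module.End.mem_eigenspace_iff] at hy
        simp only [Matrix.toLin'_apply] at hy ⊢
        exact hprojfix y hy
    have htr := hproj.trace
    rw [LinearMap.trace_eq_matrix_trace ℝ (Pi.basisFun ℝ V),
      LinearMap.toMatrix_eq_toMatrix', LinearMap.toMatrix'_toLin'] at htr
    rw [← htr]
  -- transfer E to the quotient side
  have hEB : E * B = B * Polynomial.aeval P p := by
    rw [← hEpoly, Polynomial.aeval_eq_sum_range, Polynomial.aeval_eq_sum_range,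
      Matrix.sum_mul, Matrix.mul_sum]
    refine Finset.sum_congr rfl fun r _ => ?_
    rw [Matrix.smul_mul, Matrix.mul_smul, hABr r]
  -- spectral decomposition of P and aeval P p = F
  set W : Matrix (Fin (m + 1)) (Fin (m + 1)) ℝ :=
    (Matrix.IsHermitian.eigenvectorUnitary hPH : Matrix (Fin (m + 1)) (Fin (m + 1)) ℝ)
    with hWdef
  set evP : Fin (m + 1) → ℝ := hPH.eigenvalues with hevPdef
  have hW1 : W * star W = 1 :=
    Matrix.mem_unitaryGroup_iff.mp (Matrix.IsHermitian.eigenvectorUnitary hPH).2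
  have hW2 : star W * W = 1 :=
    Matrix.mem_unitaryGroup_iff'.mp (Matrix.IsHermitian.eigenvectorUnitary hPH).2
  have hspecP : P = W * Matrix.diagonal evP * star W := by
    have := hPH.spectral_theorem
    simpa [RCLike.ofReal_real_eq_id, Function.id_comp] using this
  have hWcol : ∀ k, P *ᵥ (fun a => W a k) = evP k • (fun a => W a k) := by
    intro k
    have hcol : (fun a => W a k) = ⇑(hPH.eigenvectorBasis k) := by
      funext a
      rw [hWdef]
      exact Matrix.IsHermitian.eigenvectorUnitary_apply hPH a k
    rw [hcol]
    exact hPH.mulVec_eigenvectorBasis k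
  have hWcolne : ∀ k, (fun a => W a k) ≠ 0 := by
    intro k h
    have h1 : (star W * W) k k = (1 : ℝ) := by rw [hW2, Matrix.one_apply_eq]
    rw [Matrix.mul_apply] at h1
    have h2 : ∀ a, (star W) k a * W a k = 0 := by
      intro a
      have : W a k = 0 := congrFun h a
      rw [this, mul_zero]
    rw [Finset.sum_congr rfl fun a _ => h2 a, Finset.sum_const_zero] at h1
    exact zero_ne_one h1
  have hevPs : ∀ k, p.eval (evP k) = if evP k = μ then 1 else 0 := by
    intro k
    apply hpeval
    by_cases h : evP k = μ
    · rw [h]; exact Finset.mem_insert_self _ _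
    · set w : Fin (m + 1) → ℝ := fun a => W a k with hwdef
      have hw : P *ᵥ w = evP k • w := hWcol k
      set z : V → ℝ := B *ᵥ w with hzdef
      have hzne : z ≠ 0 := by
        intro h0
        apply hWcolne k
        have h3 : (Bᵀ * B) *ᵥ w = Bᵀ *ᵥ z := by rw [hzdef, Matrix.mulVec_mulVec]
        rw [hBtB, Matrix.one_mulVec] at h3
        show w = 0
        rw [h3, h0, Matrix.mulVec_zero]
      have hzeig : A *ᵥ z = evP k • z := by
        rw [hzdef]
        calc A *ᵥ (B *ᵥ w) = (A * B) *ᵥ w := by rw [Matrix.mulVec_mulVec]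
          _ = (B * P) *ᵥ w := by rw [hAB]
          _ = B *ᵥ (P *ᵥ w) := by rw [Matrix.mulVec_mulVec]
          _ = B *ᵥ (evP k • w) := by rw [hw]
          _ = evP k • (B *ᵥ w) := by rw [Matrix.mulVec_smul]
      obtain ⟨i, hi⟩ := hev_range z (evP k) hzne hzeig
      exact Finset.mem_insert_of_mem (Finset.mem_image.mpr ⟨i, Finset.mem_univ i, hi⟩)
  have hPaeval : Polynomial.aeval P p = F := by
    have h0 : Polynomial.aeval P p
        = W * Matrix.diagonal (fun k => if evP k = μ then 1 else 0) * star W := by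
      conv_lhs => rw [hspecP]
      rw [conj_diag_aeval W hW1 hW2 evP p,
        show (fun k => p.eval (evP k)) = (fun k => if evP k = μ then (1 : ℝ) else 0) from
          funext fun k => hevPs k]
    have hcolsF : W * Matrix.diagonal (fun k => if evP k = μ then 1 else 0) = F * W := by
      ext a k
      rw [Matrix.mul_diagonal]
      have hFW : (F * W) a k = (F *ᵥ (fun b => W b k)) a := by
        rw [Matrix.mul_apply]
        rfl
      by_cases h : evP k = μ
      · rw [if_pos h, mul_one, hFW]
        have := hFeig (fun b => W b k) (by rw [← h]; exact hWcol k)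
        rw [this]
      · rw [if_neg h, mul_zero, hFW]
        have := hForth (fun b => W b k) (evP k) (hWcol k) h
        rw [this]
        rfl
    rw [h0, hcolsF, mul_assoc, hW1, mul_one]
  -- evaluate the identity E * B = B * F at the entry (v0, 0)
  have hBw0 : ∀ w, B w 0 = if w = v0 then 1 else 0 := by
    intro w
    rw [hBapp, h1]
    rw [hv0]
    simp [Finset.mem_singleton]
  have hBv0k : ∀ k, B v0 k = if k = 0 then 1 else 0 := by
    intro k
    by_cases h : k = 0
    · subst h
      rw [hBw0, if_pos rfl, if_pos rfl]
    · have hnm : v0 ∉ C k := fun hm => h ((huniq v0 k hm).trans (huniq v0 0 hv0mem).symm)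
      rw [hBapp, if_neg hnm, zero_mul, if_neg h]
  have hEv0 : E v0 v0 = ∑ i, x i 0 * x i 0 := by
    have h2 : (E * B) v0 0 = E v0 v0 := by
      rw [Matrix.mul_apply]
      rw [Finset.sum_congr rfl fun w _ => by rw [hBw0 w]]
      simp
    have h3 : (B * Polynomial.aeval P p) v0 0 = F 0 0 := by
      rw [hPaeval, Matrix.mul_apply]
      rw [Finset.sum_congr rfl fun k _ => by rw [hBv0k k]]
      simp
    rw [← h2, hEB, h3, hFapp]
  rw [hfin, htrE, hEv0]
  congr 1
  exact Finset.sum_congr rfl fun i _ => (sq (x i 0)).symm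
end
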